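/- arXiv:1502.00063 — 5 statements merged into one kernel-verified Lean document; each statement's English description precedes it below -/
import Mathlib

section
/- Let (a_n)_{n=0}^∞ be a Leja sequence on the unit circle S¹. Then lim_{N→∞} E_0(α_N)/(N log N) = −1. -/
open Filter Topology

/-- Logarithmic energy of the first `N` points of the sequence `a`. -/
noncomputable def logEnergy (a : ℕ → ℂ) (N : ℕ) : ℝ :=
  ∑ i ∈ Finset.range N, ∑ j ∈ Finset.range N,
    if i ≠ j then Real.log (1 / ‖a i - a j‖) else 0

/-- `a` is a Leja sequence on the unit circle: all points lie on the circle and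
`a (n+1)` maximizes `∏_{i=0}^{n} |z - a i|` over the circle. -/
def IsLejaSeq (a : ℕ → ℂ) : Prop :=
  (∀ n, ‖a n‖ = 1) ∧
  ∀ n : ℕ, ∀ z : ℂ, ‖z‖ = 1 →
    ∏ i ∈ Finset.range (n + 1), ‖z - a i‖ ≤
      ∏ i ∈ Finset.range (n + 1), ‖a (n + 1) - a i‖


namespace LejaAux

lemma abs_add_le_two {u v : ℂ} (hu : ‖u‖ = 1) (hv : ‖v‖ = 1) :
    ‖u + v‖ ≤ 2 := by
  calc ‖u + v‖ ≤ ‖u‖ + ‖v‖ := norm_add_le u v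
  _ = 2 := by rw [hu, hv]; norm_num

lemma eq_of_abs_add_eq_two {u v : ℂ} (hu : ‖u‖ = 1) (hv : ‖v‖ = 1)
    (h : ‖u + v‖ = 2) : u = v := by
  have hu' : Complex.normSq u = 1 := by rw [← Complex.sq_norm, hu]; norm_num
  have hv' : Complex.normSq v = 1 := by rw [← Complex.sq_norm, hv]; norm_num
  have h' : Complex.normSq (u + v) = 4 := by rw [← Complex.sq_norm, h]; norm_num
  rw [Complex.normSq_apply] at hu' hv'
  rw [Complex.normSq_apply, Complex.add_re, Complex.add_im] at h'
  have hre : u.re = v.re := by nlinarith [sq_nonneg (u.re - v.re), sq_nonneg (u.im - v.im)]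
  have him : u.im = v.im := by nlinarith [sq_nonneg (u.re - v.re), sq_nonneg (u.im - v.im)]
  exact Complex.ext hre him

lemma exists_root_neg_one (v : ℕ) : ∃ ξ : ℂ, ξ ^ (2^v) = -1 ∧ ‖ξ‖ = 1 := by
  obtain ⟨ξ, hξ⟩ := IsAlgClosed.exists_pow_nat_eq (-1 : ℂ) (n := 2^v)
    (Nat.pow_pos (n := v) (by norm_num))
  refine ⟨ξ, hξ, ?_⟩
  have h1 : ‖ξ‖ ^ (2^v) = 1 := by rw [← norm_pow, hξ]; simp
  rcases lt_trichotomy (‖ξ‖) 1 with hlt | heq | hgt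
  · have := pow_lt_one₀ (norm_nonneg ξ) hlt (by positivity : (2:ℕ)^v ≠ 0)
    rw [h1] at this; linarith
  · exact heq
  · have := one_lt_pow₀ hgt (by positivity : (2:ℕ)^v ≠ 0)
    rw [h1] at this; linarith

lemma tele (v : ℕ) (z c : ℂ) :
    (z - c) * ∏ j ∈ Finset.range v, (z ^ (2^j) + c ^ (2^j)) = z ^ (2^v) - c ^ (2^v) := by
  induction v with
  | zero => simp
  | succ v ih =>
    rw [Finset.prod_range_succ, ← mul_assoc, ih]
    have : ∀ x : ℂ, x ^ (2^(v+1)) = (x ^ (2^v))^2 := by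
      intro x; rw [← pow_mul, pow_succ]
    rw [this z, this c]; ring

lemma prod_factors_eq_two {ι : Type*} (F : Finset ι) (f : ι → ℝ)
    (h0 : ∀ i ∈ F, 0 ≤ f i) (h2 : ∀ i ∈ F, f i ≤ 2)
    (hp : ∏ i ∈ F, f i = 2 ^ F.card) : ∀ i ∈ F, f i = 2 := by
  classical
  induction F using Finset.induction_on with
  | empty => intro i hi; simp at hi
  | @insert i₀ F hi₀ ih =>
    have hrest_le : ∏ i ∈ F, f i ≤ 2 ^ F.card := by
      calc ∏ i ∈ F, f i ≤ ∏ i ∈ F, 2 := Finset.prod_le_prod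
            (fun i hi => h0 i (Finset.mem_insert_of_mem hi))
            (fun i hi => h2 i (Finset.mem_insert_of_mem hi))
      _ = 2 ^ F.card := by rw [Finset.prod_const]
    rw [Finset.prod_insert hi₀, Finset.card_insert_of_notMem hi₀, pow_succ] at hp
    have hrest0 : 0 ≤ ∏ i ∈ F, f i := Finset.prod_nonneg
      (fun i hi => h0 i (Finset.mem_insert_of_mem hi))
    have hf0 : f i₀ = 2 := by
      by_contra hne
      have hlt : f i₀ < 2 := lt_of_le_of_ne (h2 i₀ (Finset.mem_insert_self i₀ F)) hne
      have : f i₀ * ∏ i ∈ F, f i < 2 ^ F.card * 2 := by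
        calc f i₀ * ∏ i ∈ F, f i ≤ f i₀ * 2 ^ F.card :=
              mul_le_mul_of_nonneg_left hrest_le (h0 i₀ (Finset.mem_insert_self i₀ F))
        _ < 2 * 2 ^ F.card := by
              apply mul_lt_mul_of_pos_right hlt; positivity
        _ = 2 ^ F.card * 2 := by ring
      rw [hp] at this; linarith
    have hrest : ∏ i ∈ F, f i = 2 ^ F.card := by
      rw [hf0] at hp; nlinarith
    intro i hi
    rcases Finset.mem_insert.1 hi with rfl | hi
    · exact hf0
    · exact ih (fun i hi => h0 i (Finset.mem_insert_of_mem hi))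
        (fun i hi => h2 i (Finset.mem_insert_of_mem hi)) hrest i hi

section bits
variable {n v t : ℕ}

lemma div_pow_eq (j : ℕ) (hj : j ≤ v) (hn : n + 1 = 2^v * (2*t+1)) :
    n / 2^j = 2^(v-j) * (2*t+1) - 1 := by
  have h2 : (2:ℕ)^v = 2^j * 2^(v-j) := by
    rw [← pow_add]; congr 1; omega
  set M := 2^(v-j) * (2*t+1) with hM
  have hM1 : 0 < M := by positivity
  obtain ⟨M', hM'⟩ : ∃ M', M = M' + 1 := ⟨M - 1, by omega⟩
  have hP : 0 < (2:ℕ)^j := Nat.pow_pos (n := j) (by norm_num)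
  have hn' : n = 2^j * M' + (2^j - 1) := by
    have h3 : n + 1 = 2^j * M' + 2^j := by
      rw [hn, h2, mul_assoc, ← hM, hM', mul_add, mul_one]
    omega
  rw [hn', Nat.mul_add_div hP, Nat.div_eq_of_lt (by omega)]
  omega

lemma bit_lt_v (j : ℕ) (hj : j < v) (hn : n + 1 = 2^v * (2*t+1)) : n.testBit j = true := by
  rw [Nat.testBit_eq_decide_div_mod_eq, div_pow_eq j (le_of_lt hj) hn]
  obtain ⟨K, hK, hK1⟩ : ∃ K, 2^(v-j) * (2*t+1) = 2*K ∧ 0 < K := by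
    refine ⟨2^(v-j-1) * (2*t+1), ?_, by positivity⟩
    rw [← mul_assoc, ← pow_succ']; congr 2; omega
  rw [hK]
  simp only [decide_eq_true_eq]
  omega

lemma bit_at_v (hn : n + 1 = 2^v * (2*t+1)) : n.testBit v = false := by
  rw [Nat.testBit_eq_decide_div_mod_eq, div_pow_eq v (le_refl v) hn]
  simp only [Nat.sub_self, pow_zero, one_mul, decide_eq_false_iff_not]
  omega

lemma bit_succ_lt_v (j : ℕ) (hj : j < v) (hn : n + 1 = 2^v * (2*t+1)) :
    (n+1).testBit j = false := by
  rw [Nat.testBit_eq_decide_div_mod_eq]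
  have h2 : (2:ℕ)^v = 2^j * 2^(v-j) := by rw [← pow_add]; congr 1; omega
  have hdiv : (n+1) / 2^j = 2^(v-j) * (2*t+1) := by
    rw [hn, h2, mul_assoc, Nat.mul_div_cancel_left _ (Nat.pow_pos (n := j) (by norm_num))]
  rw [hdiv]
  obtain ⟨K, hK⟩ : ∃ K, 2^(v-j) * (2*t+1) = 2*K := by
    refine ⟨2^(v-j-1) * (2*t+1), ?_⟩
    rw [← mul_assoc, ← pow_succ']; congr 2; omega
  rw [hK]
  simp only [decide_eq_false_iff_not]
  omega

lemma bit_succ_at_v (hn : n + 1 = 2^v * (2*t+1)) : (n+1).testBit v = true := by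
  rw [Nat.testBit_eq_decide_div_mod_eq]
  rw [hn, Nat.mul_div_cancel_left _ (Nat.pow_pos (n := v) (by norm_num))]
  simp only [decide_eq_true_eq]
  omega

lemma bit_gt_v (j : ℕ) (hj : v < j) (hn : n + 1 = 2^v * (2*t+1)) :
    n.testBit j = (n+1).testBit j := by
  have hnd : ¬ 2^j ∣ (n+1) := by
    intro hd
    have hdd : 2^(v+1) ∣ (n+1) := dvd_trans (pow_dvd_pow 2 (by omega)) hd
    rw [hn, pow_succ] at hdd
    have := (Nat.mul_dvd_mul_iff_left (a := 2^v) (Nat.pow_pos (n := v) (by norm_num))).1 hdd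
    omega
  have hdiv : (n+1) / 2^j = n / 2^j := by
    rw [Nat.succ_div, if_neg hnd]; omega
  rw [Nat.testBit_eq_decide_div_mod_eq, Nat.testBit_eq_decide_div_mod_eq, hdiv]

lemma testBit_lt_self {m j : ℕ} (h : m.testBit j = true) : j < m := by
  by_contra hc
  push_neg at hc
  have h2 : m < 2^j := lt_of_le_of_lt hc ((Nat.lt_two_pow_self (n := j)))
  rw [Nat.testBit_lt_two_pow h2] at h
  exact Bool.false_ne_true h

end bits



/-- number of ones in binary expansion -/
def s (n : ℕ) : ℕ := ((Finset.range n).filter (fun j => n.testBit j)).card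

noncomputable def bprod (n : ℕ) (w z : ℂ) (L : ℕ) : ℂ :=
  ∏ j ∈ Finset.range L, if n.testBit j then z ^ (2^j) + w ^ (2^j) else 1

lemma bprod_ext (n : ℕ) (w z : ℂ) {L₁ L₂ : ℕ} (h1 : n ≤ L₁) (h2 : L₁ ≤ L₂) :
    bprod n w z L₂ = bprod n w z L₁ := by
  unfold bprod
  apply (Finset.prod_subset (Finset.range_subset_range.2 h2) _).symm
  intro j hj hnj
  rw [Finset.mem_range, not_lt] at hnj
  have : n.testBit j = false := Nat.testBit_lt_two_pow (lt_of_le_of_lt (le_trans h1 hnj) ((Nat.lt_two_pow_self (n := j))))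
  rw [this]; simp

lemma abs_bprod (n : ℕ) (w z : ℂ) (L : ℕ) :
    ‖bprod n w z L‖ =
      ∏ j ∈ Finset.range L, if n.testBit j then ‖z ^ (2^j) + w ^ (2^j)‖ else 1 := by
  unfold bprod
  rw [Complex.norm_prod]
  apply Finset.prod_congr rfl
  intro j _
  split <;> simp

end LejaAux

namespace LejaAux

variable {a : ℕ → ℂ}

lemma derived (ha : IsLejaSeq a) {m : ℕ} {w : ℂ} (habs : ‖w‖ = 1)
    (hJ : ∀ z : ℂ, ∏ k ∈ Finset.range (m+1), (z - a k) = bprod (m+1) w z (m+1)) :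
    (∀ j, (m+1).testBit j = true → a (m+1) ^ (2^j) = w ^ (2^j)) ∧
    (∏ k ∈ Finset.range (m+1), ‖a (m+1) - a k‖ = 2 ^ (s (m+1))) := by
  have h1 := ha.1
  set n := m + 1 with hn
  -- the absolute value of the prefix product at any point z
  have habsval : ∀ z : ℂ, ∏ k ∈ Finset.range n, ‖z - a k‖ =
      ∏ j ∈ (Finset.range n).filter (fun j => n.testBit j),
        ‖z ^ (2^j) + w ^ (2^j)‖ := by
    intro z
    rw [← Complex.norm_prod, hJ z, abs_bprod, Finset.prod_ite, Finset.prod_const_one, mul_one]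
  -- value at z = w is 2^(s n)
  have hatw : ∏ k ∈ Finset.range n, ‖w - a k‖ = 2 ^ (s n) := by
    rw [habsval w]
    have : ∀ j ∈ (Finset.range n).filter (fun j => n.testBit j),
        ‖w ^ (2^j) + w ^ (2^j)‖ = 2 := by
      intro j _
      have : w ^ (2^j) + w ^ (2^j) = 2 * w ^ (2^j) := by ring
      rw [this, norm_mul, norm_pow, habs, one_pow, mul_one]
      simp
    rw [Finset.prod_congr rfl this, Finset.prod_const]
    rfl
  -- upper bound for value at a n
  have hub : ∀ j ∈ (Finset.range n).filter (fun j => n.testBit j),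
      ‖(a n) ^ (2^j) + w ^ (2^j)‖ ≤ 2 := by
    intro j _
    apply abs_add_le_two <;> rw [norm_pow]
    · rw [h1 n, one_pow]
    · rw [habs, one_pow]
  -- maximality: value at a n is at least value at w, hence equals 2^(s n)
  have hmax := ha.2 m w habs
  rw [← hn] at hmax
  have hle : ∏ k ∈ Finset.range n, ‖a n - a k‖ ≤ 2 ^ (s n) := by
    rw [habsval (a n)]
    calc ∏ j ∈ (Finset.range n).filter (fun j => n.testBit j),
          ‖(a n) ^ (2^j) + w ^ (2^j)‖
        ≤ ∏ j ∈ (Finset.range n).filter (fun j => n.testBit j), 2 :=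
          Finset.prod_le_prod (fun j _ => norm_nonneg _) hub
      _ = 2 ^ (s n) := by rw [Finset.prod_const]; rfl
  have heq : ∏ k ∈ Finset.range n, ‖a n - a k‖ = 2 ^ (s n) :=
    le_antisymm hle (hatw ▸ hmax)
  constructor
  · -- each factor is 2, so a n ^ 2^j = w ^ 2^j
    have hprod : ∏ j ∈ (Finset.range n).filter (fun j => n.testBit j),
        ‖(a n) ^ (2^j) + w ^ (2^j)‖ = 2 ^ (s n) := by
      rw [← habsval (a n)]; exact heq
    have hall := prod_factors_eq_two _ _ (fun j _ => norm_nonneg _) hub hprod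
    intro j hj
    have hjn : j < n := testBit_lt_self hj
    have hj2 : ‖(a n) ^ (2^j) + w ^ (2^j)‖ = 2 :=
      hall j (Finset.mem_filter.2 ⟨Finset.mem_range.2 hjn, hj⟩)
    apply eq_of_abs_add_eq_two _ _ hj2 <;> rw [norm_pow]
    · rw [h1 n, one_pow]
    · rw [habs, one_pow]
  · exact heq

end LejaAux

namespace LejaAux

theorem inv (ha : IsLejaSeq a) : ∀ m : ℕ, ∃ w : ℂ, ‖w‖ = 1 ∧
    ∀ z : ℂ, ∏ k ∈ Finset.range (m+1), (z - a k) = bprod (m+1) w z (m+1) := by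
  intro m
  induction m with
  | zero =>
    refine ⟨-(a 0), by rw [norm_neg, ha.1 0], ?_⟩
    intro z
    unfold bprod
    rw [Finset.prod_range_one, Finset.prod_range_one]
    have : Nat.testBit 1 0 = true := by decide
    rw [this]
    simp only [if_true, pow_zero, pow_one]
    norm_num
    ring
  | succ m ih =>
    obtain ⟨w, habs, hJ⟩ := ih
    obtain ⟨hpows, hprod⟩ := derived ha habs hJ
    set n := m + 1 with hn
    -- decompose n+1 = 2^v * odd
    obtain ⟨v, modd, hodd, hfact⟩ := Nat.exists_eq_two_pow_mul_odd (n := n + 1) (by omega)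
    obtain ⟨t, ht⟩ := hodd
    have hfact' : n + 1 = 2^v * (2*t+1) := by rw [hfact, ht]
    have hvn : v ≤ n := by
      have h1 : v < 2^v := (Nat.lt_two_pow_self (n := v))
      have h2 : 2^v ≤ n + 1 := by
        calc 2^v ≤ 2^v * (2*t+1) := Nat.le_mul_of_pos_right _ (by omega)
        _ = n + 1 := hfact'.symm
      omega
    obtain ⟨ξ, hξpow, hξabs⟩ := exists_root_neg_one v
    refine ⟨ξ * a n, by rw [norm_mul, hξabs, ha.1 n, mul_one], ?_⟩
    intro z
    -- preliminary facts
    have hξhigh : ∀ j, v < j → ξ ^ (2^j) = 1 := by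
      intro j hj
      have : (2:ℕ)^j = 2^v * 2^(j - v) := by rw [← pow_add]; congr 1; omega
      rw [this, pow_mul, hξpow]
      have : (2:ℕ)^(j-v) = 2 * 2^(j-v-1) := by rw [← pow_succ']; congr 1; omega
      rw [this, pow_mul]
      norm_num
    have hwv : (ξ * a n) ^ (2^v) = -((a n) ^ (2^v)) := by
      rw [mul_pow, hξpow]; ring
    have hwhigh : ∀ j, v < j → (n.testBit j = true) → (ξ * a n) ^ (2^j) = w ^ (2^j) := by
      intro j hjv hbit
      rw [mul_pow, hξhigh j hjv, one_mul, hpows j hbit]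
    -- LHS
    rw [Finset.prod_range_succ, hJ z, ← bprod_ext n w z (le_refl n) (Nat.le_succ n)]
    -- now split both sides at v
    have hv1n : v + 1 ≤ n + 1 := by omega
    have splitL : bprod n w z (n+1) =
        (∏ j ∈ Finset.range v, (z^(2^j) + (a n)^(2^j))) *
          ∏ j ∈ Finset.Ico (v+1) (n+1), (if n.testBit j then z^(2^j) + w^(2^j) else 1) := by
      unfold bprod
      rw [Finset.range_eq_Ico,
        ← Finset.prod_Ico_consecutive _ (Nat.zero_le v) (le_trans (Nat.le_succ v) hv1n),
        ← Finset.prod_Ico_consecutive _ (Nat.le_succ v) hv1n,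
        Nat.Ico_succ_singleton, Finset.prod_singleton, bit_at_v hfact', if_neg (by simp),
        one_mul, ← Finset.range_eq_Ico]
      congr 1
      apply Finset.prod_congr rfl
      intro j hj
      rw [Finset.mem_range] at hj
      rw [bit_lt_v j hj hfact', if_pos rfl, hpows j (bit_lt_v j hj hfact')]
    have splitR : bprod (n+1) (ξ * a n) z (n+1) =
        (z^(2^v) + (ξ * a n)^(2^v)) *
          ∏ j ∈ Finset.Ico (v+1) (n+1), (if (n+1).testBit j then z^(2^j) + (ξ*a n)^(2^j) else 1) := by
      unfold bprod
      rw [Finset.range_eq_Ico,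
        ← Finset.prod_Ico_consecutive _ (Nat.zero_le v) (le_trans (Nat.le_succ v) hv1n),
        ← Finset.prod_Ico_consecutive _ (Nat.le_succ v) hv1n,
        Nat.Ico_succ_singleton, Finset.prod_singleton, bit_succ_at_v hfact', if_pos rfl]
      have hlow : ∏ j ∈ Finset.Ico 0 v, (if (n+1).testBit j then z^(2^j) + (ξ*a n)^(2^j) else 1) = 1 := by
        apply Finset.prod_eq_one
        intro j hj
        rw [Finset.mem_Ico] at hj
        rw [bit_succ_lt_v j hj.2 hfact', if_neg (by simp)]
      rw [hlow, one_mul]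
    rw [splitL, splitR]
    have htail : ∏ j ∈ Finset.Ico (v+1) (n+1), (if n.testBit j then z^(2^j) + w^(2^j) else 1) =
        ∏ j ∈ Finset.Ico (v+1) (n+1), (if (n+1).testBit j then z^(2^j) + (ξ*a n)^(2^j) else 1) := by
      apply Finset.prod_congr rfl
      intro j hj
      rw [Finset.mem_Ico] at hj
      have hjv : v < j := by omega
      rw [← bit_gt_v j hjv hfact']
      rcases h : n.testBit j with hfalse | htrue
      · simp
      · rw [if_pos rfl, if_pos rfl, hwhigh j hjv h]
    rw [htail]
    have hW : z^(2^v) + (ξ * a n)^(2^v) = z^(2^v) - (a n)^(2^v) := by rw [hwv]; ring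
    rw [hW, ← tele v z (a n)]
    ring

end LejaAux

namespace LejaAux

def S (N : ℕ) : ℕ := ∑ n ∈ Finset.range N, s n

lemma s_zero : s 0 = 0 := rfl

lemma s_two_pow_add {k t : ℕ} (ht : t < 2^k) : s (2^k + t) = s t + 1 := by
  unfold s
  have hset : (Finset.range (2^k + t)).filter (fun j => (2^k+t).testBit j) =
      insert k ((Finset.range t).filter (fun j => t.testBit j)) := by
    ext j
    simp only [Finset.mem_insert, Finset.mem_filter, Finset.mem_range]
    constructor
    · rintro ⟨hjr, hjb⟩
      rcases lt_trichotomy j k with hj | rfl | hj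
      · right
        rw [Nat.testBit_two_pow_add_gt hj] at hjb
        refine ⟨?_, hjb⟩
        by_contra hc
        push_neg at hc
        have h2 : t < 2^j := lt_of_lt_of_le ((Nat.lt_two_pow_self (n := t)))
          (Nat.pow_le_pow_right (by norm_num) hc)
        rw [Nat.testBit_lt_two_pow h2] at hjb
        exact Bool.false_ne_true hjb
      · left; rfl
      · exfalso
        have h2 : 2^k + t < 2^j := by
          calc 2^k + t < 2^k + 2^k := by omega
          _ = 2^(k+1) := by rw [pow_succ]; ring
          _ ≤ 2^j := Nat.pow_le_pow_right (by norm_num) (by omega)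
        rw [Nat.testBit_lt_two_pow h2] at hjb
        exact Bool.false_ne_true hjb
    · rintro (rfl | ⟨hjt, hjb⟩)
      · refine ⟨by have := (Nat.lt_two_pow_self (n := j)); omega, ?_⟩
        rw [Nat.testBit_two_pow_add_eq, Nat.testBit_lt_two_pow ht]
        rfl
      · have hjk : j < k := by
          by_contra hc
          push_neg at hc
          have : t < 2^j := lt_of_lt_of_le ht (Nat.pow_le_pow_right (by norm_num) hc)
          rw [Nat.testBit_lt_two_pow this] at hjb
          exact Bool.false_ne_true hjb
        refine ⟨by omega, ?_⟩
        rw [Nat.testBit_two_pow_add_gt hjk]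
        exact hjb
  rw [hset, Finset.card_insert_of_notMem, add_comm]
  intro hc
  rw [Finset.mem_filter, Finset.mem_range] at hc
  rw [Nat.testBit_lt_two_pow ht] at hc
  exact Bool.false_ne_true hc.2



lemma S_split {k r : ℕ} (hr : r ≤ 2^k) : S (2^k + r) = S (2^k) + r + S r := by
  unfold S
  rw [Finset.sum_range_add]
  have : ∀ t ∈ Finset.range r, s (2^k + t) = s t + 1 := by
    intro t htr
    rw [Finset.mem_range] at htr
    exact s_two_pow_add (by omega)
  rw [Finset.sum_congr rfl this, Finset.sum_add_distrib, Finset.sum_const, Finset.card_range]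
  ring

lemma S_pow (k : ℕ) : 2 * S (2^k) = k * 2^k := by
  induction k with
  | zero => rfl
  | succ k ih =>
    have h2 : (2:ℕ)^(k+1) = 2^k + 2^k := by rw [pow_succ]; ring
    rw [h2, S_split (le_refl _)]
    have : (2:ℕ)^(k+1) = 2^k + 2^k := h2
    ring_nf
    ring_nf at ih
    omega

lemma s_le_log {n : ℕ} (hn : 1 ≤ n) : s n ≤ Nat.log 2 n + 1 := by
  unfold s
  calc ((Finset.range n).filter (fun j => n.testBit j)).card
      ≤ (Finset.range (Nat.log 2 n + 1)).card := by
        apply Finset.card_le_card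
        intro j hj
        rw [Finset.mem_filter] at hj
        rw [Finset.mem_range, Nat.lt_succ_iff]
        apply (Nat.le_log_iff_pow_le (by norm_num) (by omega)).2
        by_contra hc
        push_neg at hc
        rw [Nat.testBit_lt_two_pow hc] at hj
        exact Bool.false_ne_true hj.2
    _ = Nat.log 2 n + 1 := Finset.card_range _

lemma S_bounds : ∀ N : ℕ, 1 ≤ N →
    N * Nat.log 2 N ≤ 2 * S N + 4 * N ∧ 2 * S N ≤ N * Nat.log 2 N + 4 * N := by
  intro N
  induction N using Nat.strong_induction_on with
  | _ N ih =>
    intro hN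
    set κ := Nat.log 2 N with hκ
    have hκ1 : 2^κ ≤ N := Nat.pow_log_le_self 2 (by omega)
    have hκ2 : N < 2^(κ+1) := Nat.lt_pow_succ_log_self (by norm_num) N
    set A := 2^κ with hA
    set r := N - A with hr
    have hNr : N = A + r := by omega
    have hrA : r ≤ A := by
      have : (2:ℕ)^(κ+1) = A + A := by rw [hA, pow_succ]; ring
      omega
    have hSN : 2 * S N = κ * A + 2 * r + 2 * S r := by
      rw [hNr, S_split hrA]
      have := S_pow κ
      rw [← hA] at this ⊢
      omega
    rcases Nat.eq_zero_or_pos r with hr0 | hrpos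
    · have h1 : N * κ = κ * A + r * κ := by rw [hNr]; ring
      have h2 : r * κ = 0 := by rw [hr0]; ring
      have h3 : S r = 0 := by rw [hr0]; rfl
      constructor
      · omega
      · omega
    · have hrN : r < N := by omega
      obtain ⟨ihl, ihu⟩ := ih r hrN hrpos
      set κr := Nat.log 2 r with hκr
      have hκrκ : κr ≤ κ := Nat.log_mono_right (by omega)
      set d := κ - κr with hd
      have hκd : κr + d = κ := by omega
      have hrd : r * d ≤ 2 * A := by
        have h1 : r < 2^(κr+1) := Nat.lt_pow_succ_log_self (by norm_num) r
        have h2 : d ≤ 2^d := le_of_lt ((Nat.lt_two_pow_self (n := d)))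
        calc r * d ≤ 2^(κr+1) * 2^d := Nat.mul_le_mul (le_of_lt h1) h2
        _ = 2^(κr+1+d) := by rw [← pow_add]
        _ = 2 * A := by rw [hA, ← pow_succ']; congr 1; omega
      have e1 : N * κ = A * κ + r * κ := by rw [hNr]; ring
      have e2 : r * κ = r * κr + r * d := by rw [← Nat.mul_add, hκd]
      have e3 : A * κ = κ * A := by ring
      have hrκr : r * κr ≤ r * κ := Nat.mul_le_mul_left r hκrκ
      constructor
      · omega
      · omega

variable {a : ℕ → ℂ}

lemma sum_log (ha : IsLejaSeq a) (N : ℕ) :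
    ∑ k ∈ Finset.range N, Real.log (‖a N - a k‖) = (s N : ℝ) * Real.log 2 := by
  cases N with
  | zero => simp [s]
  | succ m =>
    obtain ⟨w, habs, hJ⟩ := inv ha m
    have hp := (derived ha habs hJ).2
    have hne : ∀ k ∈ Finset.range (m+1), ‖a (m+1) - a k‖ ≠ 0 := by
      intro k hk h0
      have hz : ∏ k ∈ Finset.range (m+1), ‖a (m+1) - a k‖ = 0 :=
        Finset.prod_eq_zero hk h0
      rw [hp] at hz
      exact (by positivity : ((2:ℝ))^(s (m+1)) ≠ 0) hz
    rw [← Real.log_prod hne, hp, Real.log_pow]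

lemma energy_eq (ha : IsLejaSeq a) :
    ∀ N, logEnergy a N = -2 * Real.log 2 * ((S N : ℝ)) := by
  have hsum := sum_log ha
  have key : ∀ N, logEnergy a N = -2 * Real.log 2 * (∑ n ∈ Finset.range N, (s n : ℝ)) := by
    intro N
    induction N with
    | zero => simp [logEnergy]
    | succ N ih =>
      unfold logEnergy at ih ⊢
      rw [Finset.sum_range_succ]
      have hinner : ∀ i, ∑ j ∈ Finset.range (N+1), (if i ≠ j then Real.log (1 / ‖a i - a j‖) else 0)
          = (∑ j ∈ Finset.range N, if i ≠ j then Real.log (1 / ‖a i - a j‖) else 0)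
            + (if i ≠ N then Real.log (1 / ‖a i - a N‖) else 0) := by
        intro i; rw [Finset.sum_range_succ]
      rw [Finset.sum_congr rfl (fun i _ => hinner i), Finset.sum_add_distrib, ih]
      have hlast : ∑ j ∈ Finset.range (N+1), (if N ≠ j then Real.log (1 / ‖a N - a j‖) else 0)
          = -((s N : ℝ) * Real.log 2) := by
        rw [Finset.sum_range_succ, if_neg (by simp), add_zero]
        rw [← hsum N]
        rw [← Finset.sum_neg_distrib]
        apply Finset.sum_congr rfl
        intro j hj
        rw [Finset.mem_range] at hj
        rw [if_pos (by omega), one_div, Real.log_inv]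
      have hcol : ∑ i ∈ Finset.range N, (if i ≠ N then Real.log (1 / ‖a i - a N‖) else 0)
          = -((s N : ℝ) * Real.log 2) := by
        rw [← hsum N, ← Finset.sum_neg_distrib]
        apply Finset.sum_congr rfl
        intro j hj
        rw [Finset.mem_range] at hj
        rw [if_pos (by omega), one_div, Real.log_inv]
        congr 1
        rw [show a j - a N = -(a N - a j) by ring, norm_neg]
      rw [hlast, hcol, Finset.sum_range_succ]
      ring
  intro N
  rw [key N, S]
  push_cast
  ring

end LejaAux


theorem leja_logEnergy_firstOrder (a : ℕ → ℂ) (ha : IsLejaSeq a) :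
    Tendsto (fun N : ℕ => logEnergy a N / ((N : ℝ) * Real.log N)) atTop (𝓝 (-1)) := by
  have hE := LejaAux.energy_eq ha
  have hl2 : (0:ℝ) < Real.log 2 := Real.log_pos (by norm_num)
  have hlogN : Tendsto (fun N : ℕ => Real.log N) atTop atTop :=
    Real.tendsto_log_atTop.comp tendsto_natCast_atTop_atTop
  have h0 : Tendsto (fun N : ℕ => Real.log 2 / Real.log N) atTop (𝓝 0) :=
    Tendsto.div_atTop tendsto_const_nhds hlogN
  have hlo : Tendsto (fun N : ℕ => -1 - 4 * (Real.log 2 / Real.log N)) atTop (𝓝 (-1)) := by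
    have := (h0.const_mul (4:ℝ)).const_sub (-1)
    simpa using this
  have hhi : Tendsto (fun N : ℕ => -1 + 5 * (Real.log 2 / Real.log N)) atTop (𝓝 (-1)) := by
    have := (h0.const_mul (5:ℝ)).const_add (-1)
    simpa using this
  apply tendsto_of_tendsto_of_tendsto_of_le_of_le' hlo hhi
  · filter_upwards [eventually_ge_atTop 2] with N hN
    have hb := LejaAux.S_bounds N (by omega)
    have hS2 : 2 * (LejaAux.S N : ℝ) ≤ (N:ℝ) * (Nat.log 2 N : ℝ) + 4 * N := by
      exact_mod_cast hb.2
    have hN1 : (1:ℝ) < N := by exact_mod_cast hN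
    have hNpos : (0:ℝ) < N := by linarith
    have hL : (0:ℝ) < Real.log N := Real.log_pos hN1
    have hNL : (0:ℝ) < (N:ℝ) * Real.log N := by positivity
    have hκL : (Nat.log 2 N : ℝ) * Real.log 2 ≤ Real.log N := by
      have hp : ((2:ℝ))^(Nat.log 2 N) ≤ (N:ℝ) := by
        exact_mod_cast Nat.pow_log_le_self 2 (by omega : N ≠ 0)
      have h := Real.log_le_log (by positivity) hp
      rwa [Real.log_pow] at h
    have key1 : 2 * (LejaAux.S N:ℝ) * Real.log 2 ≤ (N:ℝ) * Real.log N + 4 * Real.log 2 * N := by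
      have h1 : 2 * (LejaAux.S N:ℝ) * Real.log 2
          ≤ ((N:ℝ) * (Nat.log 2 N : ℝ) + 4 * N) * Real.log 2 :=
        mul_le_mul_of_nonneg_right hS2 (le_of_lt hl2)
      have h2 : (N:ℝ) * ((Nat.log 2 N : ℝ) * Real.log 2) ≤ (N:ℝ) * Real.log N :=
        mul_le_mul_of_nonneg_left hκL (le_of_lt hNpos)
      nlinarith
    rw [hE, le_div_iff₀ hNL]
    have hexp : (-1 - 4 * (Real.log 2 / Real.log N)) * ((N:ℝ) * Real.log N)
        = -((N:ℝ) * Real.log N) - 4 * Real.log 2 * N := by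
      field_simp
    rw [hexp]
    linarith
  · filter_upwards [eventually_ge_atTop 2] with N hN
    have hb := LejaAux.S_bounds N (by omega)
    have hS1 : (N:ℝ) * (Nat.log 2 N : ℝ) ≤ 2 * (LejaAux.S N : ℝ) + 4 * N := by
      exact_mod_cast hb.1
    have hN1 : (1:ℝ) < N := by exact_mod_cast hN
    have hNpos : (0:ℝ) < N := by linarith
    have hL : (0:ℝ) < Real.log N := Real.log_pos hN1
    have hNL : (0:ℝ) < (N:ℝ) * Real.log N := by positivity
    have hLκ : Real.log N ≤ ((Nat.log 2 N : ℝ) + 1) * Real.log 2 := by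
      have hp : (N:ℝ) < ((2:ℝ))^(Nat.log 2 N + 1) := by
        exact_mod_cast Nat.lt_pow_succ_log_self (by norm_num) N
      have h := Real.log_le_log (by positivity) (le_of_lt hp)
      rw [Real.log_pow] at h
      push_cast at h
      linarith
    have key2 : (N:ℝ) * Real.log N - 5 * Real.log 2 * N ≤ 2 * (LejaAux.S N:ℝ) * Real.log 2 := by
      have h1 : ((N:ℝ) * (Nat.log 2 N : ℝ)) * Real.log 2
          ≤ (2 * (LejaAux.S N:ℝ) + 4 * N) * Real.log 2 :=
        mul_le_mul_of_nonneg_right hS1 (le_of_lt hl2)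
      have h2 : (N:ℝ) * Real.log N ≤ (N:ℝ) * (((Nat.log 2 N:ℝ) + 1) * Real.log 2) :=
        mul_le_mul_of_nonneg_left hLκ (le_of_lt hNpos)
      nlinarith
    rw [hE, div_le_iff₀ hNL]
    have hexp : (-1 + 5 * (Real.log 2 / Real.log N)) * ((N:ℝ) * Real.log N)
        = -((N:ℝ) * Real.log N) + 5 * Real.log 2 * N := by
      field_simp
    rw [hexp]
    linarith
end

section
/- Let (a_n)_{n=0}^∞ be a Leja sequence on the unit circle S¹. Then for every N ≥ 2 one has 0 ≤ (E_0(α_N) + N log N)/N < log(4/3). -/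
open Filter Topology

/-! ### Binary digit sum -/

def sdig (n : ℕ) : ℕ := (Nat.digits 2 n).sum

lemma sdig_zero : sdig 0 = 0 := by simp [sdig]

lemma sdig_one : sdig 1 = 1 := by simp [sdig]

lemma sdig_two_mul (m : ℕ) (hm : 0 < m) : sdig (2 * m) = sdig m := by
  unfold sdig
  rw [Nat.digits_def' (by norm_num : 1 < 2) (by omega)]
  simp [Nat.mul_div_cancel_left, Nat.mul_mod_right]

lemma sdig_two_mul_add_one (m : ℕ) : sdig (2 * m + 1) = sdig m + 1 := by
  unfold sdig
  rw [Nat.digits_def' (by norm_num : 1 < 2) (by omega)]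
  have h1 : (2 * m + 1) % 2 = 1 := by omega
  have h2 : (2 * m + 1) / 2 = m := by omega
  rw [h1, h2]
  simp [Nat.add_comm]

lemma sdig_pow_add : ∀ n j : ℕ, j < 2 ^ n → sdig (2 ^ n + j) = sdig j + 1 := by
  intro n
  induction n with
  | zero => intro j hj; interval_cases j; rw [show 2 ^ 0 + 0 = 1 from rfl, sdig_zero, sdig_one]
  | succ n IH =>
    intro j hj
    obtain ⟨i, rfl | rfl⟩ := Nat.even_or_odd' j
    · have hi : i < 2 ^ n := by rw [pow_succ] at hj; omega
      have e : 2 ^ (n + 1) + 2 * i = 2 * (2 ^ n + i) := by ring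
      rw [e, sdig_two_mul _ (by positivity), IH i hi]
      rcases Nat.eq_zero_or_pos i with rfl | hi0
      · simp [sdig]
      · rw [sdig_two_mul _ hi0]
    · have hi : i < 2 ^ n := by rw [pow_succ] at hj; omega
      have e : 2 ^ (n + 1) + (2 * i + 1) = 2 * (2 ^ n + i) + 1 := by ring
      rw [e, sdig_two_mul_add_one, IH i hi, sdig_two_mul_add_one]

/-! ### Partial sums of digit sums -/

def Ssum (N : ℕ) : ℕ := ∑ j ∈ Finset.range N, sdig j

lemma Ssum_split (n r : ℕ) (h : r ≤ 2 ^ n) :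
    Ssum (2 ^ n + r) = Ssum (2 ^ n) + r + Ssum r := by
  unfold Ssum
  rw [Finset.sum_range_add]
  have : ∑ i ∈ Finset.range r, sdig (2 ^ n + i)
      = ∑ i ∈ Finset.range r, (sdig i + 1) := by
    refine Finset.sum_congr rfl fun i hi => ?_
    exact sdig_pow_add n i (lt_of_lt_of_le (Finset.mem_range.mp hi) h)
  rw [this, Finset.sum_add_distrib, Finset.sum_const, Finset.card_range, smul_eq_mul]
  omega

lemma Ssum_pow (n : ℕ) : 2 * Ssum (2 ^ n) = n * 2 ^ n := by
  induction n with
  | zero => simp [Ssum, sdig]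
  | succ n IH =>
    have h : Ssum (2 ^ (n + 1)) = Ssum (2 ^ n) + 2 ^ n + Ssum (2 ^ n) := by
      rw [pow_succ, show 2 ^ n * 2 = 2 ^ n + 2 ^ n by ring]
      exact Ssum_split n (2 ^ n) le_rfl
    calc 2 * Ssum (2 ^ (n + 1)) = 2 * (2 * Ssum (2 ^ n)) + 2 * 2 ^ n := by rw [h]; ring
    _ = 2 * (n * 2 ^ n) + 2 * 2 ^ n := by rw [IH]
    _ = (n + 1) * 2 ^ (n + 1) := by ring


/-! ### The one-variable inequality -/

lemma log_four : Real.log 4 = 2 * Real.log 2 := by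
  rw [show (4 : ℝ) = 2 ^ 2 by norm_num, Real.log_pow]
  push_cast; ring

lemma g_bounds {x : ℝ} (hx0 : 0 < x) (hx1 : x ≤ 1) :
    0 ≤ (1 + x) * Real.log (1 + x) - x * Real.log x - 2 * x * Real.log 2 ∧
    (1 + x) * Real.log (1 + x) - x * Real.log x - 2 * x * Real.log 2 ≤ Real.log (4 / 3) := by
  have h1x : (0 : ℝ) < 1 + x := by linarith
  have hlog43 : Real.log (4 / 3) = 2 * Real.log 2 - Real.log 3 := by
    rw [Real.log_div (by norm_num) (by norm_num), log_four]
  constructor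
  · -- lower bound : (4x/(1+x))^x ≤ 1 + x
    have hp2 : (0 : ℝ) < 4 * x / (1 + x) := by positivity
    have key : (4 * x / (1 + x)) ^ x ≤ 1 + x := by
      have hgm := Real.geom_mean_le_arith_mean2_weighted
        (by linarith : (0:ℝ) ≤ 1 - x) hx0.le zero_le_one hp2.le (by ring)
      rw [Real.one_rpow, one_mul] at hgm
      refine hgm.trans ?_
      have e : (1 + x) - ((1 - x) * 1 + x * (4 * x / (1 + x))) = 2 * x * (1 - x) / (1 + x) := by
        field_simp; ring
      nlinarith [div_nonneg (by nlinarith : (0:ℝ) ≤ 2 * x * (1 - x)) h1x.le]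
    have hlog := Real.log_le_log (Real.rpow_pos_of_pos hp2 x) key
    rw [Real.log_rpow hp2,
      Real.log_div (by positivity) (by positivity),
      Real.log_mul (by norm_num) hx0.ne', log_four] at hlog
    nlinarith [hlog]
  · -- upper bound : ((1+x)/(4x))^x ≤ 4/(3(1+x))
    have hp2 : (0 : ℝ) < (1 + x) / (4 * x) := by positivity
    have key : ((1 + x) / (4 * x)) ^ x ≤ 4 / (3 * (1 + x)) := by
      have hgm := Real.geom_mean_le_arith_mean2_weighted
        (by linarith : (0:ℝ) ≤ 1 - x) hx0.le zero_le_one hp2.le (by ring)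
      rw [Real.one_rpow, one_mul] at hgm
      refine hgm.trans ?_
      have e : (1 - x) * 1 + x * ((1 + x) / (4 * x)) = (5 - 3 * x) / 4 := by
        field_simp; ring
      rw [e, div_le_div_iff₀ (by norm_num) (by positivity)]
      nlinarith [sq_nonneg (3 * x - 1)]
    have hlog := Real.log_le_log (Real.rpow_pos_of_pos hp2 x) key
    rw [Real.log_rpow hp2,
      Real.log_div (by positivity) (by positivity),
      Real.log_div (by norm_num) (by positivity),
      Real.log_mul (by norm_num) hx0.ne',
      Real.log_mul (by norm_num) h1x.ne', log_four] at hlog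
    nlinarith [hlog]

lemma gap_bounds {t r : ℝ} (ht : 0 < t) (hr : 0 < r) (hrt : r ≤ t) :
    0 ≤ (t + r) * Real.log (t + r) - t * Real.log t - r * Real.log r - 2 * r * Real.log 2 ∧
    (t + r) * Real.log (t + r) - t * Real.log t - r * Real.log r - 2 * r * Real.log 2
      ≤ t * Real.log (4 / 3) := by
  set x : ℝ := r / t with hx
  have hx0 : 0 < x := div_pos hr ht
  have hx1 : x ≤ 1 := by rw [hx, div_le_one ht]; exact hrt
  have hrtx : r = t * x := by rw [hx]; field_simp
  have hlog_tr : Real.log (t + r) = Real.log t + Real.log (1 + x) := by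
    rw [show t + r = t * (1 + x) by rw [hrtx]; ring,
      Real.log_mul ht.ne' (by linarith : (1 : ℝ) + x ≠ 0)]
  have hlog_r : Real.log r = Real.log t + Real.log x := by
    rw [hrtx, Real.log_mul ht.ne' hx0.ne']
  have expand : (t + r) * Real.log (t + r) - t * Real.log t - r * Real.log r
      - 2 * r * Real.log 2
      = t * ((1 + x) * Real.log (1 + x) - x * Real.log x - 2 * x * Real.log 2) := by
    rw [hlog_tr, hlog_r]
    rw [hrtx]
    ring
  obtain ⟨g1, g2⟩ := g_bounds hx0 hx1
  rw [expand]
  exact ⟨mul_nonneg ht.le g1, mul_le_mul_of_nonneg_left g2 ht.le⟩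

lemma D_bounds : ∀ N : ℕ, 1 ≤ N →
    0 ≤ (N : ℝ) * Real.log N - 2 * Real.log 2 * (Ssum N : ℝ) ∧
    (N : ℝ) * Real.log N - 2 * Real.log 2 * (Ssum N : ℝ) < (N : ℝ) * Real.log (4 / 3) := by
  intro N
  induction N using Nat.strong_induction_on with
  | _ N IH =>
  intro hN
  have l43 : 0 < Real.log (4 / 3) := Real.log_pos (by norm_num)
  set n := Nat.log 2 N with hn
  have h1 : 2 ^ n ≤ N := Nat.pow_log_le_self 2 (by omega)
  have h2 : N < 2 ^ (n + 1) := Nat.lt_pow_succ_log_self (by norm_num) N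
  set r := N - 2 ^ n with hrdef
  have hNr : N = 2 ^ n + r := by omega
  have hr2 : r ≤ 2 ^ n := by rw [pow_succ] at h2; omega
  have hcast2S : (2 : ℝ) * (Ssum (2 ^ n) : ℝ) = (n : ℝ) * (2 : ℝ) ^ n := by
    have := Ssum_pow n; exact_mod_cast congrArg (Nat.cast : ℕ → ℝ) this
  rcases Nat.eq_zero_or_pos r with hr0 | hrpos
  · -- N = 2 ^ n exactly
    have hN2 : N = 2 ^ n := by omega
    have hlogN : Real.log N = (n : ℝ) * Real.log 2 := by
      rw [hN2]; push_cast; rw [Real.log_pow]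
    have hzero : (N : ℝ) * Real.log N - 2 * Real.log 2 * (Ssum N : ℝ) = 0 := by
      rw [hlogN, hN2]
      have : (Ssum (2 ^ n) : ℝ) = (n : ℝ) * (2 : ℝ) ^ n / 2 := by linarith [hcast2S]
      rw [this]; push_cast; ring
    refine ⟨le_of_eq hzero.symm, ?_⟩
    rw [hzero]
    have hNpos : (0 : ℝ) < (N : ℝ) := by exact_mod_cast (by omega : 0 < N)
    positivity
  · -- 1 ≤ r < 2 ^ n
    have hrlt : r < 2 ^ n := by omega
    have hrN : r < N := by omega
    obtain ⟨IH1, IH2⟩ := IH r hrN hrpos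
    have hs : Ssum N = Ssum (2 ^ n) + r + Ssum r := by
      rw [hNr]; exact Ssum_split n r hr2
    set t : ℝ := (2 : ℝ) ^ n with htdef
    have ht : 0 < t := by positivity
    have hrR : (0 : ℝ) < (r : ℝ) := by exact_mod_cast hrpos
    have hrt : (r : ℝ) ≤ t := by
      rw [htdef]; exact_mod_cast hr2
    obtain ⟨G1, G2⟩ := gap_bounds ht hrR hrt
    have hNR : (N : ℝ) = t + r := by rw [hNr]; push_cast; ring
    have hlogt : Real.log t = (n : ℝ) * Real.log 2 := by rw [htdef, Real.log_pow]
    have hdecomp : (N : ℝ) * Real.log N - 2 * Real.log 2 * (Ssum N : ℝ)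
        = ((r : ℝ) * Real.log r - 2 * Real.log 2 * (Ssum r : ℝ))
          + ((t + r) * Real.log (t + r) - t * Real.log t - (r : ℝ) * Real.log r
            - 2 * r * Real.log 2) := by
      have hsR : (Ssum N : ℝ) = (Ssum (2 ^ n) : ℝ) + (r : ℝ) + (Ssum r : ℝ) := by
        exact_mod_cast congrArg (Nat.cast : ℕ → ℝ) hs
      have hS2n : (Ssum (2 ^ n) : ℝ) = (n : ℝ) * t / 2 := by
        rw [htdef]; linarith [hcast2S]
      rw [hsR, hS2n, hNR, hlogt]
      ring
    constructor
    · rw [hdecomp]; linarith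
    · rw [hdecomp, hNR]
      have : (t + (r : ℝ)) * Real.log (4 / 3) = t * Real.log (4 / 3) + r * Real.log (4 / 3) := by
        ring
      rw [this]
      linarith


/-! ### Circle geometry helpers -/

lemma exists_sqrt_circle (u : ℂ) (hu : ‖u‖ = 1) :
    ∃ z : ℂ, ‖z‖ = 1 ∧ z ^ 2 = u := by
  refine ⟨Complex.exp ((u.arg / 2 : ℝ) * Complex.I), ?_, ?_⟩
  · rw [Complex.norm_exp]
    simp
  · rw [← Complex.exp_nat_mul]
    have e : ((2 : ℕ) : ℂ) * ((u.arg / 2 : ℝ) * Complex.I) = (u.arg : ℝ) * Complex.I := by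
      push_cast; ring
    rw [e]
    have := Complex.norm_mul_exp_arg_mul_I u
    rw [hu] at this
    simpa using this

noncomputable def upt (k : ℕ) : ℂ :=
  ⟨(1 - (k : ℝ) ^ 2) / (1 + (k : ℝ) ^ 2), 2 * (k : ℝ) / (1 + (k : ℝ) ^ 2)⟩

lemma upt_abs (k : ℕ) : ‖upt k‖ = 1 := by
  have hden : (0 : ℝ) < 1 + (k : ℝ) ^ 2 := by positivity
  have hns : Complex.normSq (upt k) = 1 := by
    rw [upt, Complex.normSq_mk]
    field_simp
    ring
  rw [Complex.norm_def, hns, Real.sqrt_one]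

lemma upt_inj : Function.Injective upt := by
  intro k j h
  have hre := congrArg Complex.re h
  simp only [upt] at hre
  have hk : (0 : ℝ) < 1 + (k : ℝ) ^ 2 := by positivity
  have hj : (0 : ℝ) < 1 + (j : ℝ) ^ 2 := by positivity
  rw [div_eq_div_iff hk.ne' hj.ne'] at hre
  have hsq : ((k : ℝ) - j) * ((k : ℝ) + j) = 0 := by nlinarith
  have hk0 : (0 : ℝ) ≤ (k : ℝ) := Nat.cast_nonneg k
  have hj0 : (0 : ℝ) ≤ (j : ℝ) := Nat.cast_nonneg j
  rcases mul_eq_zero.mp hsq with h' | h'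
  · have : (k : ℝ) = j := by linarith
    exact_mod_cast this
  · have h1 : (k : ℝ) = 0 := by linarith
    have h2 : (j : ℝ) = 0 := by linarith
    have : (k : ℝ) = (j : ℝ) := by rw [h1, h2]
    exact_mod_cast this

lemma exists_avoid (F : Finset ℂ) : ∃ z : ℂ, ‖z‖ = 1 ∧ z ∉ F := by
  have hinf : (Set.range upt).Infinite := Set.infinite_range_of_injective upt_inj
  obtain ⟨z, hz, hzF⟩ := hinf.exists_notMem_finset F
  obtain ⟨k, rfl⟩ := hz
  exact ⟨_, upt_abs k, hzF⟩

lemma eq_neg_of_two_le_abs {a b : ℂ} (ha : ‖a‖ = 1) (hb : ‖b‖ = 1)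
    (h : 2 ≤ ‖a - b‖) : a = -b := by
  have hub : ‖a - b‖ ≤ 2 := by
    calc ‖a - b‖ ≤ ‖a‖ + ‖b‖ :=
          norm_sub_le a b
    _ = 2 := by rw [ha, hb]; norm_num
  have heq : ‖a - b‖ = 2 := le_antisymm hub h
  have hnsab : Complex.normSq (a - b) = 4 := by
    have := Complex.sq_norm (a - b)
    rw [heq] at this; nlinarith [this]
  have hnsa : Complex.normSq a = 1 := by
    have := Complex.sq_norm a; rw [ha] at this; nlinarith [this]
  have hnsb : Complex.normSq b = 1 := by
    have := Complex.sq_norm b; rw [hb] at this; nlinarith [this]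
  have hexp : Complex.normSq (a - b)
      = Complex.normSq a - 2 * (a * (starRingEnd ℂ) b).re + Complex.normSq b := by
    simp [Complex.normSq_apply, Complex.sub_re, Complex.sub_im, Complex.mul_re,
      Complex.mul_im, Complex.conj_re, Complex.conj_im]
    ring
  have hre : (a * (starRingEnd ℂ) b).re = -1 := by
    rw [hexp, hnsa, hnsb] at hnsab; linarith
  have habs1 : ‖a * (starRingEnd ℂ) b‖ = 1 := by
    rw [norm_mul, Complex.norm_conj, ha, hb]; norm_num
  have him : (a * (starRingEnd ℂ) b).im = 0 := by
    have h1 := Complex.sq_norm (a * (starRingEnd ℂ) b)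
    rw [habs1] at h1
    have h2 := Complex.normSq_apply (a * (starRingEnd ℂ) b)
    rw [hre] at h2
    nlinarith [h1, h2]
  have hz : a * (starRingEnd ℂ) b = -1 := by
    apply Complex.ext <;> simp [hre, him]
  have hbb : (starRingEnd ℂ) b * b = 1 := by
    rw [mul_comm, Complex.mul_conj, hnsb]; norm_num
  calc a = a * ((starRingEnd ℂ) b * b) := by rw [hbb, mul_one]
  _ = a * (starRingEnd ℂ) b * b := by ring
  _ = -1 * b := by rw [hz]
  _ = -b := by ring

/-! ### Leja sequence structure -/

noncomputable def Vprod (a : ℕ → ℂ) (n : ℕ) : ℝ :=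
  ∏ i ∈ Finset.range n, ‖a n - a i‖

lemma prod_pair (a : ℕ → ℂ) (m : ℕ) (hp : ∀ i < m, a (2 * i + 1) = -a (2 * i)) (z : ℂ) :
    ∏ j ∈ Finset.range (2 * m), ‖z - a j‖
      = ∏ i ∈ Finset.range m, ‖z ^ 2 - a (2 * i) ^ 2‖ := by
  induction m with
  | zero => simp
  | succ m IH =>
    have hm : ∀ i < m, a (2 * i + 1) = -a (2 * i) := fun i hi => hp i (hi.trans m.lt_succ_self)
    rw [show 2 * (m + 1) = 2 * m + 1 + 1 by ring, Finset.prod_range_succ,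
      Finset.prod_range_succ, Finset.prod_range_succ, IH hm, hp m m.lt_succ_self, mul_assoc]
    congr 1
    rw [← norm_mul]
    congr 1
    ring

lemma Vprod_pos (a : ℕ → ℂ) (ha : IsLejaSeq a) (n : ℕ) : 0 < Vprod a n := by
  cases n with
  | zero => simp [Vprod]
  | succ n =>
    obtain ⟨z, hz1, hzF⟩ := exists_avoid ((Finset.range (n + 1)).image a)
    have hle := ha.2 n z hz1
    refine lt_of_lt_of_le ?_ hle
    apply Finset.prod_pos
    intro i hi
    have hne : z ≠ a i := by
      intro h
      exact hzF (h ▸ Finset.mem_image_of_mem a hi)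
    exact norm_pos_iff.mpr (sub_ne_zero.mpr hne)

lemma leja_ne (a : ℕ → ℂ) (ha : IsLejaSeq a) {i n : ℕ} (h : i < n) : a n ≠ a i := by
  intro he
  have hpos := Vprod_pos a ha n
  have hzero : Vprod a n = 0 := by
    apply Finset.prod_eq_zero (Finset.mem_range.mpr h)
    rw [he, sub_self, norm_zero]
  rw [hzero] at hpos
  exact lt_irrefl _ hpos

lemma abs_neg_sub_self {c : ℂ} (hc : ‖c‖ = 1) : ‖-c - c‖ = 2 := by
  rw [show -c - c = -(2 * c) by ring, norm_neg, norm_mul, hc,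
    Complex.norm_two, mul_one]

theorem leja_pair (a : ℕ → ℂ) (ha : IsLejaSeq a) : ∀ m, a (2 * m + 1) = -a (2 * m) := by
  intro m
  induction m using Nat.strong_induction_on with
  | _ m IH =>
  rcases Nat.eq_zero_or_pos m with rfl | hm
  · have h := ha.2 0 (-a 0) (by rw [norm_neg]; exact ha.1 0)
    norm_num [Finset.prod_range_one] at h
    have h2 : ‖-a 0 - a 0‖ = 2 := abs_neg_sub_self (ha.1 0)
    rw [h2] at h
    simpa using eq_neg_of_two_le_abs (ha.1 1) (ha.1 0) h
  · have hpair_lt : ∀ i < m, a (2 * i + 1) = -a (2 * i) := fun i hi => IH i hi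
    have hfact : ∀ z : ℂ, (∏ j ∈ Finset.range (2 * m), ‖z - a j‖)
        = ∏ i ∈ Finset.range m, ‖z ^ 2 - a (2 * i) ^ 2‖ :=
      prod_pair a m hpair_lt
    have hc1 : ‖a (2 * m)‖ = 1 := ha.1 _
    -- maximality of H at (a (2m))^2
    have hHmax : ∀ u : ℂ, ‖u‖ = 1 →
        (∏ i ∈ Finset.range m, ‖u - a (2 * i) ^ 2‖)
          ≤ ∏ i ∈ Finset.range m, ‖a (2 * m) ^ 2 - a (2 * i) ^ 2‖ := by
      intro u hu
      obtain ⟨z, hz1, hz2⟩ := exists_sqrt_circle u hu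
      have hle := ha.2 (2 * m - 1) z hz1
      rw [show 2 * m - 1 + 1 = 2 * m from by omega] at hle
      rw [hfact z, hfact (a (2 * m)), hz2] at hle
      exact hle
    have hHpos : 0 < ∏ i ∈ Finset.range m, ‖a (2 * m) ^ 2 - a (2 * i) ^ 2‖ := by
      apply Finset.prod_pos
      intro i hi
      rw [Finset.mem_range] at hi
      have h1 : a (2 * m) ≠ a (2 * i) := leja_ne a ha (by omega)
      have h2 : a (2 * m) ≠ -a (2 * i) := by
        rw [← hpair_lt i hi]
        exact leja_ne a ha (by omega)
      have hne : a (2 * m) ^ 2 - a (2 * i) ^ 2 ≠ 0 := by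
        intro h
        rcases sq_eq_sq_iff_eq_or_eq_neg.mp (sub_eq_zero.mp h) with h' | h'
        · exact h1 h'
        · exact h2 h'
      exact norm_pos_iff.mpr hne
    have hstep := ha.2 (2 * m) (-a (2 * m))
      (by rw [norm_neg]; exact hc1)
    rw [Finset.prod_range_succ, Finset.prod_range_succ, hfact, hfact, neg_sq] at hstep
    have hd1 : ‖a (2 * m + 1)‖ = 1 := ha.1 _
    have hub : (∏ i ∈ Finset.range m, ‖a (2 * m + 1) ^ 2 - a (2 * i) ^ 2‖)
        ≤ ∏ i ∈ Finset.range m, ‖a (2 * m) ^ 2 - a (2 * i) ^ 2‖ :=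
      hHmax _ (by rw [norm_pow, hd1, one_pow])
    have h2c : ‖-a (2 * m) - a (2 * m)‖ = 2 := abs_neg_sub_self hc1
    have hchain : (∏ i ∈ Finset.range m, ‖a (2 * m) ^ 2 - a (2 * i) ^ 2‖) * 2
        ≤ (∏ i ∈ Finset.range m, ‖a (2 * m) ^ 2 - a (2 * i) ^ 2‖)
          * ‖a (2 * m + 1) - a (2 * m)‖ := by
      calc (∏ i ∈ Finset.range m, ‖a (2 * m) ^ 2 - a (2 * i) ^ 2‖) * 2
          = (∏ i ∈ Finset.range m, ‖a (2 * m) ^ 2 - a (2 * i) ^ 2‖)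
            * ‖-a (2 * m) - a (2 * m)‖ := by rw [h2c]
      _ ≤ (∏ i ∈ Finset.range m, ‖a (2 * m + 1) ^ 2 - a (2 * i) ^ 2‖)
            * ‖a (2 * m + 1) - a (2 * m)‖ := hstep
      _ ≤ (∏ i ∈ Finset.range m, ‖a (2 * m) ^ 2 - a (2 * i) ^ 2‖)
            * ‖a (2 * m + 1) - a (2 * m)‖ := by
          apply mul_le_mul_of_nonneg_right hub (norm_nonneg _)
    have h2le : 2 ≤ ‖a (2 * m + 1) - a (2 * m)‖ :=
      le_of_mul_le_mul_left (by linarith [hchain]) hHpos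
    exact eq_neg_of_two_le_abs hd1 hc1 h2le

lemma sq_leja (a : ℕ → ℂ) (ha : IsLejaSeq a) : IsLejaSeq (fun m => a (2 * m) ^ 2) := by
  constructor
  · intro n
    rw [norm_pow, ha.1, one_pow]
  · intro m u hu
    obtain ⟨z, hz1, hz2⟩ := exists_sqrt_circle u hu
    have hle := ha.2 (2 * m + 1) z hz1
    rw [show 2 * m + 1 + 1 = 2 * (m + 1) from by ring] at hle
    rw [prod_pair a (m + 1) (fun i _ => leja_pair a ha i) z,
      prod_pair a (m + 1) (fun i _ => leja_pair a ha i) (a (2 * (m + 1)))] at hle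
    rw [hz2] at hle
    simpa using hle

theorem Vprod_formula : ∀ n : ℕ, ∀ a : ℕ → ℂ, IsLejaSeq a → Vprod a n = 2 ^ sdig n := by
  intro n
  induction n using Nat.strong_induction_on with
  | _ n IH =>
  intro a ha
  obtain ⟨m, rfl | rfl⟩ := Nat.even_or_odd' n
  · rcases Nat.eq_zero_or_pos m with rfl | hm
    · simp [Vprod, sdig]
    · rw [Vprod, prod_pair a m (fun i _ => leja_pair a ha i) (a (2 * m))]
      have he : (∏ i ∈ Finset.range m, ‖a (2 * m) ^ 2 - a (2 * i) ^ 2‖)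
          = Vprod (fun k => a (2 * k) ^ 2) m := rfl
      rw [he, IH m (by omega) _ (sq_leja a ha), sdig_two_mul m hm]
  · rw [Vprod, Finset.prod_range_succ,
      prod_pair a m (fun i _ => leja_pair a ha i) (a (2 * m + 1)),
      leja_pair a ha m, neg_sq, abs_neg_sub_self (ha.1 (2 * m))]
    have he : (∏ i ∈ Finset.range m, ‖a (2 * m) ^ 2 - a (2 * i) ^ 2‖)
        = Vprod (fun k => a (2 * k) ^ 2) m := rfl
    rw [he, IH m (by omega) _ (sq_leja a ha), sdig_two_mul_add_one, pow_succ]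

/-! ### Energy identity and main theorem -/

lemma logEnergy_eq (a : ℕ → ℂ) (ha : IsLejaSeq a) (N : ℕ) :
    logEnergy a N = -(2 * Real.log 2 * (Ssum N : ℝ)) := by
  induction N with
  | zero => simp [logEnergy, Ssum]
  | succ N IH =>
    have habs_ne : ∀ j, j < N → ‖a N - a j‖ ≠ 0 := fun j hj =>
      (norm_pos_iff.mpr (sub_ne_zero.mpr (leja_ne a ha hj))).ne'
    have hsum : (∑ j ∈ Finset.range N,
        if N ≠ j then Real.log (1 / ‖a N - a j‖) else 0)
        = -Real.log (Vprod a N) := by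
      rw [Vprod, Real.log_prod (fun j hj => habs_ne j (Finset.mem_range.mp hj)),
        ← Finset.sum_neg_distrib]
      refine Finset.sum_congr rfl fun j hj => ?_
      have hjN := Finset.mem_range.mp hj
      rw [if_pos (Nat.ne_of_gt hjN), one_div, Real.log_inv]
    have hsum2 : (∑ i ∈ Finset.range N,
        if i ≠ N then Real.log (1 / ‖a i - a N‖) else 0)
        = -Real.log (Vprod a N) := by
      rw [← hsum]
      refine Finset.sum_congr rfl fun i hi => ?_
      have hiN := Finset.mem_range.mp hi
      rw [if_pos (Nat.ne_of_lt hiN), if_pos (Nat.ne_of_gt hiN),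
        norm_sub_rev]
    have hkey : logEnergy a (N + 1) = logEnergy a N
        + ((∑ i ∈ Finset.range N,
            if i ≠ N then Real.log (1 / ‖a i - a N‖) else 0)
          + ((∑ j ∈ Finset.range N,
            if N ≠ j then Real.log (1 / ‖a N - a j‖) else 0)
          + (if N ≠ N then Real.log (1 / ‖a N - a N‖) else 0))) := by
      simp only [logEnergy, Finset.sum_range_succ]
      rw [Finset.sum_add_distrib]
      ring
    rw [hkey, hsum, hsum2, if_neg (by omega), Vprod_formula N a ha, Real.log_pow, IH,
      show Ssum (N + 1) = Ssum N + sdig N from Finset.sum_range_succ _ N]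
    push_cast
    ring

theorem leja_logEnergy_secondOrderBounds (a : ℕ → ℂ) (ha : IsLejaSeq a)
    (N : ℕ) (hN : 2 ≤ N) :
    0 ≤ (logEnergy a N + (N : ℝ) * Real.log N) / (N : ℝ) ∧
      (logEnergy a N + (N : ℝ) * Real.log N) / (N : ℝ) < Real.log (4 / 3) := by
  have hE : logEnergy a N + (N : ℝ) * Real.log N
      = (N : ℝ) * Real.log N - 2 * Real.log 2 * (Ssum N : ℝ) := by
    rw [logEnergy_eq a ha N]; ring
  obtain ⟨hD1, hD2⟩ := D_bounds N (by omega)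
  have hNpos : (0 : ℝ) < (N : ℝ) := by exact_mod_cast (by omega : 0 < N)
  constructor
  · rw [hE]
    exact div_nonneg hD1 hNpos.le
  · rw [hE, div_lt_iff₀ hNpos]
    linarith [hD2]
end

section
/- Let (a_n)_{n=0}^∞ be a Leja sequence on the unit circle S¹, and for each integer k ≥ 0 set N(k) = 1 + 4 + 4² + ⋯ + 4^k = (4^{k+1} − 1)/3. Then lim_{k→∞} (E_0(α_{N(k)}) + N(k) log N(k))/N(k) = log(4/3). -/
open Filter Topology

namespace LejaProofAux

open Finset

noncomputable section LejaAux

/-- number of ones in binary expansion -/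
def s2 : ℕ → ℕ
  | 0 => 0
  | (n+1) => s2 ((n+1)/2) + (n+1) % 2
decreasing_by exact Nat.div_lt_self (Nat.succ_pos n) one_lt_two

/-- lowest set binary bit (as a power of 2); low 0 = 0 -/
def lowb : ℕ → ℕ
  | 0 => 0
  | (n+1) => if (n+1) % 2 = 1 then 1 else 2 * lowb ((n+1)/2)
decreasing_by exact Nat.div_lt_self (Nat.succ_pos n) one_lt_two

def topb (P : ℕ) : ℕ := 2 ^ Nat.log 2 P

lemma s2_zero : s2 0 = 0 := by rw [s2]

lemma s2_succ (n : ℕ) : s2 (n+1) = s2 ((n+1)/2) + (n+1) % 2 := by rw [s2]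

lemma s2_pos' (n : ℕ) (h : n ≠ 0) : s2 ((n)/2) + n % 2 = s2 n := by
  cases n with
  | zero => simp at h
  | succ m => rw [s2_succ]

lemma s2_two_mul (n : ℕ) : s2 (2*n) = s2 n := by
  cases n with
  | zero => rfl
  | succ m =>
    have : 2*(m+1) = (2*m+1)+1 := by ring
    rw [this, s2_succ]
    have h1 : ((2*m+1)+1)/2 = m+1 := by omega
    have h2 : ((2*m+1)+1) % 2 = 0 := by omega
    rw [h1, h2]
    rfl

lemma s2_two_mul_add_one (n : ℕ) : s2 (2*n+1) = s2 n + 1 := by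
  rw [s2_succ]
  have h1 : (2*n+1)/2 = n := by omega
  have h2 : (2*n+1) % 2 = 1 := by omega
  rw [h1, h2]

lemma lowb_two_mul (n : ℕ) (h : n ≠ 0) : lowb (2*n) = 2 * lowb n := by
  have : ∃ m, 2*n = m+1 := ⟨2*n-1, by omega⟩
  obtain ⟨m, hm⟩ := this
  rw [hm, lowb, ← hm]
  have h2 : (2*n) % 2 = 0 := by omega
  have h1 : (2*n)/2 = n := by omega
  rw [h1]
  simp [h2]

lemma lowb_two_mul_add_one (n : ℕ) : lowb (2*n+1) = 1 := by
  rw [show 2*n+1 = (2*n)+1 from rfl, lowb]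
  simp [Nat.mul_add_mod]

lemma s2_pow (K : ℕ) : s2 (2^K) = 1 := by
  induction K with
  | zero => rw [pow_zero, show (1:ℕ) = 0+1 from rfl, s2_succ]; simp [s2_zero]
  | succ k ih => rw [pow_succ, mul_comm, s2_two_mul, ih]

lemma lowb_pow (K : ℕ) : lowb (2^K) = 2^K := by
  induction K with
  | zero => rw [pow_zero, show (1:ℕ) = 0+1 from rfl, lowb]; simp
  | succ k ih =>
    rw [pow_succ, mul_comm, lowb_two_mul _ (by positivity), ih, mul_comm]

lemma s2_pow_add (K r : ℕ) (h : r < 2^K) : s2 (2^K + r) = s2 r + 1 := by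
  induction K generalizing r with
  | zero =>
    interval_cases r
    rw [pow_zero, show (1:ℕ)+0 = 0+1 from rfl, s2_succ]
  | succ k ih =>
    rcases Nat.even_or_odd r with ⟨q, hq⟩ | ⟨q, hq⟩
    · subst hq
      have hq' : q < 2^k := by rw [pow_succ] at h; omega
      have : 2^(k+1) + (q+q) = 2*(2^k + q) := by ring
      rw [this, s2_two_mul, ih q hq', show q+q = 2*q from by ring, s2_two_mul]
    · subst hq
      have hq' : q < 2^k := by rw [pow_succ] at h; omega
      have : 2^(k+1) + (2*q+1) = 2*(2^k + q)+1 := by ring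
      rw [this, s2_two_mul_add_one, ih q hq', s2_two_mul_add_one]

lemma lowb_pow_add (K r : ℕ) (h1 : 1 ≤ r) (h : r < 2^K) : lowb (2^K + r) = lowb r := by
  induction K generalizing r with
  | zero => omega
  | succ k ih =>
    rcases Nat.even_or_odd r with ⟨q, hq⟩ | ⟨q, hq⟩
    · subst hq
      have hq' : q < 2^k := by rw [pow_succ] at h; omega
      have : 2^(k+1) + (q+q) = 2*(2^k + q) := by ring
      rw [this, lowb_two_mul _ (by positivity), ih q (by omega) hq',
        show q+q = 2*q from by ring, lowb_two_mul _ (by omega)]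
    · subst hq
      have : 2^(k+1) + (2*q+1) = 2*(2^k + q)+1 := by ring
      rw [this, lowb_two_mul_add_one, lowb_two_mul_add_one]

lemma lowb_le (r : ℕ) : lowb r ≤ r := by
  induction r using Nat.strong_induction_on with
  | _ r ih =>
    match r with
    | 0 => simp [lowb]
    | (n+1) =>
      rw [lowb]
      by_cases h : (n+1) % 2 = 1
      · simp [h]
      · simp [h]
        have := ih ((n+1)/2) (Nat.div_lt_self (Nat.succ_pos n) one_lt_two)
        omega

lemma lowb_pos (r : ℕ) (h : 1 ≤ r) : 1 ≤ lowb r := by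
  induction r using Nat.strong_induction_on with
  | _ r ih =>
    match r with
    | (n+1) =>
      rw [lowb]
      by_cases h : (n+1) % 2 = 1
      · simp [h]
      · simp [h]
        have := ih ((n+1)/2) (Nat.div_lt_self (Nat.succ_pos n) one_lt_two) (by omega)
        omega

/-- lowb is a power of two -/
lemma lowb_is_pow (r : ℕ) (h : 1 ≤ r) : ∃ v, lowb r = 2 ^ v := by
  induction r using Nat.strong_induction_on with
  | _ r ih =>
    match r with
    | (n+1) =>
      rw [lowb]
      by_cases h : (n+1) % 2 = 1
      · exact ⟨0, by simp [h]⟩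
      · simp [h]
        obtain ⟨v, hv⟩ := ih ((n+1)/2) (Nat.div_lt_self (Nat.succ_pos n) one_lt_two) (by omega)
        exact ⟨v+1, by rw [hv]; ring⟩

lemma topb_pow (K : ℕ) : topb (2^K) = 2^K := by
  rw [topb, Nat.log_pow (by norm_num) K]

lemma topb_le (P : ℕ) (h : 1 ≤ P) : topb P ≤ P := Nat.pow_log_le_self 2 (by omega)

lemma lt_two_topb (P : ℕ) (h : 1 ≤ P) : P < 2 * topb P := by
  have := Nat.lt_pow_succ_log_self (b := 2) (by norm_num) P
  rw [topb]; rw [pow_succ] at this; omega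

lemma topb_eq_of (K P : ℕ) (h1 : 2^K ≤ P) (h2 : P < 2^(K+1)) : topb P = 2^K := by
  rw [topb, Nat.log_eq_of_pow_le_of_lt_pow h1 h2]

lemma topb_pos (P : ℕ) : 1 ≤ topb P := Nat.pow_pos (by norm_num)

end LejaAux

section CircleAux

lemma abs_sub_le_two {A B : ℂ} (hA : ‖A‖ = 1) (hB : ‖B‖ = 1) :
    ‖A - B‖ ≤ 2 := by
  calc ‖A-B‖ ≤ ‖A‖ + ‖B‖ := norm_sub_le _ _
  _ = 2 := by rw [hA,hB]; norm_num

lemma abs_sub_eq_two_iff {A B : ℂ} (hA : ‖A‖ = 1) (hB : ‖B‖ = 1) :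
    ‖A - B‖ = 2 ↔ A = -B := by
  have hA2 : Complex.normSq A = 1 := by rw [← Complex.sq_norm, hA]; norm_num
  have hB2 : Complex.normSq B = 1 := by rw [← Complex.sq_norm, hB]; norm_num
  constructor
  · intro h
    have h2 : Complex.normSq (A-B) = 4 := by
      rw [← Complex.sq_norm, h]; norm_num
    have h3 : Complex.normSq (A+B) = 0 := by
      have e1 := Complex.normSq_add A B
      have e2 := Complex.normSq_sub A B
      rw [hA2, hB2] at e1 e2
      rw [e2] at h2
      linarith [e1 ▸ (Complex.normSq_nonneg (A+B))]
    have := Complex.normSq_eq_zero.mp h3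
    linear_combination this
  · intro h; subst h
    have : -B - B = -(2*B) := by ring
    rw [this, norm_neg, norm_mul, hB]
    simp

lemma abs_neg_sub_eq_two {B : ℂ} (hB : ‖B‖ = 1) :
    ‖-B - B‖ = 2 := by
  rw [abs_sub_eq_two_iff (by rw [norm_neg, hB]) hB]

lemma exists_unit_pow_eq {c : ℂ} (hc : ‖c‖ = 1) {n : ℕ} (hn : 1 ≤ n) :
    ∃ w : ℂ, ‖w‖ = 1 ∧ w ^ n = c := by
  obtain ⟨w, hw⟩ := IsAlgClosed.exists_pow_nat_eq c hn
  refine ⟨w, ?_, hw⟩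
  have h1 : ‖w‖ ^ n = 1 := by rw [← norm_pow, hw, hc]
  rcases lt_trichotomy (‖w‖) 1 with h|h|h
  · exfalso
    have := pow_lt_one₀ (norm_nonneg _) h (n := n) (Nat.one_le_iff_ne_zero.mp hn)
    rw [h1] at this; exact lt_irrefl 1 this
  · exact h
  · exfalso
    have := one_lt_pow₀ h (n := n) (Nat.one_le_iff_ne_zero.mp hn)
    rw [h1] at this; exact lt_irrefl 1 this

lemma abs_eq_one_of_pow {w : ℂ} {n : ℕ} (hn : 1 ≤ n) (h : ‖w ^ n‖ = 1) :
    ‖w‖ = 1 := by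
  rw [norm_pow] at h
  rcases lt_trichotomy (‖w‖) 1 with h'|h'|h'
  · exfalso
    have := pow_lt_one₀ (norm_nonneg _) h' (n := n) (Nat.one_le_iff_ne_zero.mp hn)
    rw [h] at this; exact lt_irrefl 1 this
  · exact h'
  · exfalso
    have := one_lt_pow₀ h' (n := n) (Nat.one_le_iff_ne_zero.mp hn)
    rw [h] at this; exact lt_irrefl 1 this

end CircleAux

section Defs

def KLja (a : ℕ → ℂ) (P : ℕ) : Prop :=
  (∀ n, ‖a n‖ = 1) ∧
  ∀ j, j + 2 ≤ P → ∀ z : ℂ, ‖z‖ = 1 →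
    ∏ i ∈ Finset.range (j+1), ‖z - a i‖ ≤
      ∏ i ∈ Finset.range (j+1), ‖a (j+1) - a i‖

lemma KLja.mono {a : ℕ → ℂ} {P Q : ℕ} (h : KLja a P) (hQ : Q ≤ P) : KLja a Q :=
  ⟨h.1, fun j hj => h.2 j (le_trans hj hQ)⟩

def GrandStmt (P : ℕ) : Prop := ∀ a : ℕ → ℂ, KLja a P → 1 ≤ P →
  ( (∀ z : ℂ, ∏ i ∈ Finset.range P, (z - a i)
      = (z ^ topb P - (a 0) ^ topb P) * ∏ i ∈ Finset.range (P - topb P), (z - a (topb P + i)))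
  ∧ (2 ≤ P → KLja (fun j => a (topb (P-1) + j)) (P - topb (P-1)))
  ∧ (∀ z : ℂ, ‖z‖ = 1 →
      ∏ i ∈ Finset.range P, ‖z - a i‖ ≤ 2 ^ s2 P)
  ∧ (∀ z : ℂ, ‖z‖ = 1 →
      (∏ i ∈ Finset.range P, ‖z - a i‖ = 2 ^ s2 P ↔
        z ^ lowb P = -(a (P - lowb P)) ^ lowb P))
  ∧ (∀ w : ℂ, w ^ lowb P = -(a (P - lowb P)) ^ lowb P → w ^ topb P = -(a 0) ^ topb P) )

/-- Key consequence: a point `a i` chosen by the Leja rule attains the max and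
lies in the equality set. -/
lemma keyE_of {a : ℕ → ℂ} {P i : ℕ} (ha : KLja a P) (hG : GrandStmt i)
    (h1 : 1 ≤ i) (h2 : i + 1 ≤ P) :
    (∏ i' ∈ Finset.range i, ‖a i - a i'‖) = (2:ℝ) ^ s2 i ∧
    (a i) ^ lowb i = -(a (i - lowb i)) ^ lowb i ∧
    (a i) ^ topb i = -(a 0) ^ topb i := by
  obtain ⟨hC, hD, hA, hB, hB2⟩ := hG a (ha.mono (by omega)) h1
  have hcirc := ha.1
  -- the maximality condition at step i-1
  have hmax : ∀ z : ℂ, ‖z‖ = 1 →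
      ∏ i' ∈ Finset.range i, ‖z - a i'‖ ≤
        ∏ i' ∈ Finset.range i, ‖a i - a i'‖ := by
    intro z hz
    have := ha.2 (i-1) (by omega) z hz
    rwa [show i - 1 + 1 = i by omega] at this
  -- a witness attaining the max
  have hμ1 : 1 ≤ lowb i := lowb_pos i h1
  have htarget : ‖-(a (i - lowb i)) ^ lowb i‖ = 1 := by
    rw [show -(a (i - lowb i)) ^ lowb i = -((a (i - lowb i)) ^ lowb i) by ring,
      norm_neg, norm_pow, hcirc]
    simp
  obtain ⟨w, hw1, hw2⟩ := exists_unit_pow_eq htarget hμ1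
  have hwmax : ∏ i' ∈ Finset.range i, ‖w - a i'‖ = 2 ^ s2 i :=
    (hB w hw1).mpr hw2
  have hile : ∏ i' ∈ Finset.range i, ‖a i - a i'‖ = 2 ^ s2 i := by
    have hle := hA (a i) (hcirc i)
    have hge := hmax w hw1
    rw [hwmax] at hge
    linarith
  have hin := (hB (a i) (hcirc i)).mp hile
  exact ⟨hile, hin, hB2 _ hin⟩

end Defs

/-- chain a low-scale antipodal relation up to a higher power-of-two scale -/
lemma chain_pow {w b c : ℂ} {τ m : ℕ} (hτ : ∃ s, τ = 2^s) (hm : ∃ κ, m = 2^κ)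
    (hlt : τ < m) (h1 : w ^ τ = -b ^ τ) (h2 : b ^ m = c) : w ^ m = c := by
  obtain ⟨s, rfl⟩ := hτ
  obtain ⟨κ, rfl⟩ := hm
  have hsκ : s < κ := (Nat.pow_lt_pow_iff_right (by norm_num)).mp hlt
  have hdvd : (2:ℕ)^(s+1) ∣ 2^κ := pow_dvd_pow 2 hsκ
  obtain ⟨q, hq⟩ := hdvd
  have hsq : w ^ (2^(s+1)) = b ^ (2^(s+1)) := by
    have e : ∀ x : ℂ, x ^ (2^(s+1)) = (x ^ (2^s))^2 := by
      intro x; rw [← pow_mul, ← pow_succ]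
    rw [e w, e b, h1, neg_sq]
  calc w ^ 2^κ = (w ^ 2^(s+1))^q := by rw [← pow_mul, ← hq]
  _ = (b ^ 2^(s+1))^q := by rw [hsq]
  _ = b ^ 2^κ := by rw [← pow_mul, ← hq]
  _ = c := h2

theorem grand : ∀ P, GrandStmt P := by
  intro P
  induction P using Nat.strong_induction_on with
  | _ P IH =>
  intro a ha hP1
  have hcirc := ha.1
  have hmP : topb P ≤ P := topb_le P hP1
  have hP2m : P < 2 * topb P := lt_two_topb P hP1
  have hm1 : 1 ≤ topb P := topb_pos P
  -- Part D --
  have hD : 2 ≤ P → KLja (fun j => a (topb (P-1) + j)) (P - topb (P-1)) := by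
    intro h2P
    set M := topb (P-1) with hMdef
    have hM1 : 1 ≤ M := topb_pos (P-1)
    have hMle : M ≤ P - 1 := topb_le (P-1) (by omega)
    have hMlt : P - 1 < 2 * M := lt_two_topb (P-1) (by omega)
    set t : ℕ → ℂ := fun j => a (M + j) with htdef
    refine ⟨fun n => hcirc _, ?_⟩
    intro j
    induction j using Nat.strong_induction_on with
    | _ j IHj =>
    intro hj z hz
    -- ρ = j + 1
    have hρle : j + 1 ≤ P - M - 1 := by omega
    have hρM : j + 1 ≤ M - 1 := by omega
    have hKt : KLja t (j+1) := ⟨fun n => hcirc _, fun j' hj' => IHj j' (by omega) (by omega)⟩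
    obtain ⟨hC_t, hD_t, hA_t, hB_t, hB2_t⟩ := IH (j+1) (by omega) t hKt (by omega)
    -- topb M = M
    have hMpow : ∃ κ, M = 2 ^ κ := ⟨Nat.log 2 (P-1), rfl⟩
    have htopbM : topb M = M := by
      obtain ⟨κ, hκ⟩ := hMpow; rw [hκ, topb_pow]
    -- a M ^ M = - a 0 ^ M
    have hEM := keyE_of ha (IH M (by omega)) hM1 (by omega)
    have hVM : (a M) ^ M = -(a 0) ^ M := by
      have h' := hEM.2.2; rwa [htopbM] at h'
    -- a (M + (j+1)) ^ M = - a 0 ^ M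
    have htopbMρ : topb (M + (j+1)) = M := by
      obtain ⟨κ, hκ⟩ := hMpow
      rw [hκ] at hMlt ⊢
      exact topb_eq_of κ _ (by omega) (by rw [pow_succ]; omega)
    have hEMρ := keyE_of ha (IH (M + (j+1)) (by omega)) (by omega) (by omega)
    have hVMρ : (a (M + (j+1))) ^ M = -(a 0) ^ M := by
      have h' := hEMρ.2.2; rwa [htopbMρ] at h'
    -- factorization at M + (j+1)
    obtain ⟨hCc, _, _, _, _⟩ := IH (M + (j+1)) (by omega) a (ha.mono (by omega)) (by omega)
    rw [htopbMρ, show M + (j+1) - M = j + 1 by omega] at hCc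
    have habs : ∀ y : ℂ, ∏ i ∈ Finset.range (M + (j+1)), ‖y - a i‖
        = ‖y ^ M - (a 0) ^ M‖ * ∏ i ∈ Finset.range (j+1), ‖y - t i‖ := by
      intro y
      rw [← norm_prod, ← norm_prod, ← norm_mul, hCc y]
    -- maximality at step M + j
    have hmax : ∀ y : ℂ, ‖y‖ = 1 →
        ∏ i ∈ Finset.range (M + (j+1)), ‖y - a i‖ ≤
          ∏ i ∈ Finset.range (M + (j+1)), ‖a (M + (j+1)) - a i‖ := by
      intro y hy
      have := ha.2 (M + j) (by omega) y hy
      rwa [show M + j + 1 = M + (j+1) by omega] at this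
    -- abs of a0^M
    have ha0M : ‖(a 0) ^ M‖ = 1 := by rw [norm_pow, hcirc]; simp
    -- RHS simplification
    have hRHS : ∏ i ∈ Finset.range (M + (j+1)), ‖a (M + (j+1)) - a i‖
        = 2 * ∏ i ∈ Finset.range (j+1), ‖t (j+1) - t i‖ := by
      rw [habs, hVMρ]
      congr 1
      exact abs_neg_sub_eq_two ha0M
    -- witness
    have hμ1 : 1 ≤ lowb (j+1) := lowb_pos _ (by omega)
    have htgt : ‖-(t ((j+1) - lowb (j+1))) ^ lowb (j+1)‖ = 1 := by
      rw [show -(t ((j+1) - lowb (j+1))) ^ lowb (j+1)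
        = -((t ((j+1) - lowb (j+1))) ^ lowb (j+1)) by ring, norm_neg, norm_pow, hcirc]
      simp
    obtain ⟨w, hw1, hw2⟩ := exists_unit_pow_eq htgt hμ1
    have hwval : ∏ i ∈ Finset.range (j+1), ‖w - t i‖ = 2 ^ s2 (j+1) :=
      (hB_t w hw1).mpr hw2
    have hwtop := hB2_t w hw2
    -- chain : w ^ M = - a0 ^ M
    have ht0 : t 0 = a M := by simp [htdef]
    have hwM : w ^ M = -(a 0) ^ M := by
      refine chain_pow ⟨Nat.log 2 (j+1), rfl⟩ hMpow ?_ hwtop ?_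
      · calc topb (j+1) ≤ j+1 := topb_le _ (by omega)
        _ < M := by omega
      · rw [ht0]; exact hVM
    -- evaluate maximality at w
    have hw3 := hmax w hw1
    rw [habs w, hwval, hRHS, hwM, abs_neg_sub_eq_two ha0M] at hw3
    -- conclude
    have hgoal : ∏ i ∈ Finset.range (j+1), ‖t (j+1) - t i‖ ≥ 2 ^ s2 (j+1) := by
      linarith
    calc ∏ i ∈ Finset.range (j+1), ‖z - t i‖ ≤ 2 ^ s2 (j+1) := hA_t z hz
    _ ≤ _ := hgoal
  -- Part C --
  have hprefix : ∀ z : ℂ, ∏ i ∈ Finset.range (topb P), (z - a i)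
      = z ^ (topb P) - (a 0) ^ (topb P) := by
    have hmK : topb P = 2 ^ Nat.log 2 P := rfl
    rcases Nat.eq_zero_or_pos (Nat.log 2 P) with hK0 | hKpos
    · intro z
      rw [hmK, hK0]
      simp [Finset.prod_range_one]
    · intro z
      set k := Nat.log 2 P - 1 with hkdef
      have hkk : Nat.log 2 P = k + 1 := by omega
      set h2 : ℕ := 2 ^ k with hh2
      have hmh : topb P = h2 + h2 := by
        rw [hmK, hkk, pow_succ, hh2]; ring
      have hh1 : 1 ≤ h2 := Nat.pow_pos (by norm_num)
      have hhP : h2 < P := by omega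
      obtain ⟨hCh, _, _, _, _⟩ := IH h2 hhP a (ha.mono (by omega)) hh1
      have htb : topb h2 = h2 := by rw [hh2, topb_pow]
      rw [htb] at hCh
      simp only [Nat.sub_self, Finset.range_zero, Finset.prod_empty, mul_one] at hCh
      -- the tail of length h2 is a Leja section
      have hKu : KLja (fun j => a (h2 + j)) h2 := by
        rcases Nat.eq_or_lt_of_le hmP with hPm | hPm
        · -- topb P = P
          have h2P : 2 ≤ P := by omega
          have hDD := hD h2P
          have htp : topb (P-1) = h2 := by
            apply topb_eq_of
            · omega
            · rw [← hkk, ← hmK]; omega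
          rw [htp] at hDD
          exact hDD.mono (by omega)
        · -- topb P < P
          obtain ⟨_, hDm, _, _, _⟩ := IH (topb P) hPm a (ha.mono hmP) (by omega)
          have h2m : 2 ≤ topb P := by omega
          have hDD := hDm h2m
          have htp : topb (topb P - 1) = h2 := by
            apply topb_eq_of
            · omega
            · rw [← hkk, ← hmK]; omega
          rw [htp] at hDD
          exact hDD.mono (by omega)
      obtain ⟨hCu, _, _, _, _⟩ := IH h2 hhP _ hKu hh1
      rw [htb] at hCu
      simp only [Nat.sub_self, Finset.range_zero, Finset.prod_empty, mul_one] at hCu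
      -- a h2 ^ h2 = - a 0 ^ h2
      have hEh := keyE_of ha (IH h2 hhP) hh1 (by omega)
      have hVh : (a h2) ^ h2 = -(a 0) ^ h2 := by
        have h' := hEh.2.2; rwa [htb] at h'
      -- combine
      have hsplit : ∏ i ∈ Finset.range (topb P), (z - a i)
          = (∏ i ∈ Finset.range h2, (z - a i)) * ∏ i ∈ Finset.range h2, (z - a (h2 + i)) := by
        rw [hmh]
        exact Finset.prod_range_add (fun i => (z - a i)) h2 h2
      rw [hsplit, hCh z, hCu z]
      simp only [add_zero]
      rw [hVh, hmh]
      ring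
  have hC : ∀ z : ℂ, ∏ i ∈ Finset.range P, (z - a i)
      = (z ^ topb P - (a 0) ^ topb P) * ∏ i ∈ Finset.range (P - topb P), (z - a (topb P + i)) := by
    intro z
    have hsplit : ∏ i ∈ Finset.range P, (z - a i)
        = (∏ i ∈ Finset.range (topb P), (z - a i)) *
          ∏ i ∈ Finset.range (P - topb P), (z - a (topb P + i)) := by
      have he : topb P + (P - topb P) = P := by omega
      rw [← Finset.prod_range_add (fun i => (z - a i)) (topb P) (P - topb P), he]
    rw [hsplit, hprefix z]
  -- Parts A, B, B2 --
  have habsP : ∀ y : ℂ, ∏ i ∈ Finset.range P, ‖y - a i‖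
      = ‖y ^ topb P - (a 0) ^ topb P‖ *
        ∏ i ∈ Finset.range (P - topb P), ‖y - a (topb P + i)‖ := by
    intro y
    rw [← norm_prod, ← norm_prod, ← norm_mul, hC y]
  have ha0m : ‖(a 0) ^ topb P‖ = 1 := by rw [norm_pow, hcirc]; simp
  have hmK : topb P = 2 ^ Nat.log 2 P := rfl
  rcases Nat.eq_or_lt_of_le hmP with hPm | hPm
  · -- P is a power of two
    have hs2 : s2 P = 1 := by rw [← hPm, hmK, s2_pow]
    have hlow : lowb P = P := by rw [← hPm, hmK, lowb_pow]
    have hPP : P - topb P = 0 := by omega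
    refine ⟨hC, hD, ?_, ?_, ?_⟩
    · intro z hz
      rw [habsP z, hPP]
      simp only [Finset.range_zero, Finset.prod_empty, mul_one]
      have h1 : ‖z ^ topb P‖ = 1 := by rw [norm_pow, hz]; simp
      rw [hs2, pow_one]
      exact abs_sub_le_two h1 ha0m
    · intro z hz
      rw [habsP z, hPP]
      simp only [Finset.range_zero, Finset.prod_empty, mul_one]
      rw [hs2, pow_one, hlow, show P - P = 0 by omega, hPm]
      have h1 : ‖z ^ P‖ = 1 := by rw [norm_pow, hz]; simp
      have h0 : ‖(a 0) ^ P‖ = 1 := by rw [norm_pow, hcirc]; simp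
      exact abs_sub_eq_two_iff h1 h0
    · intro w hw
      rw [hlow, show P - P = 0 by omega] at hw
      rw [← hPm] at hw
      exact hw
  · -- P = topb P + r with 1 ≤ r < topb P
    have hr1 : 1 ≤ P - topb P := by omega
    have hrm : P - topb P < topb P := by omega
    have hPsum : P = 2 ^ Nat.log 2 P + (P - topb P) := by omega
    have hs2P : s2 P = s2 (P - topb P) + 1 := by
      rw [hPsum, s2_pow_add _ _ (by omega), ← hPsum]
    have hlowP : lowb P = lowb (P - topb P) := by
      rw [hPsum, lowb_pow_add _ _ hr1 (by omega), ← hPsum]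
    have hμ1 : 1 ≤ lowb (P - topb P) := lowb_pos _ hr1
    have hμr : lowb (P - topb P) ≤ P - topb P := lowb_le _
    have hMm : topb (P - 1) = topb P := by
      rw [hmK]
      exact topb_eq_of _ _ (by omega) (by rw [pow_succ, ← hmK]; omega)
    have hKt : KLja (fun j => a (topb P + j)) (P - topb P) := by
      have hDD := hD (by omega)
      rwa [hMm] at hDD
    obtain ⟨_, _, hA_t, hB_t, hB2_t⟩ := IH (P - topb P) (by omega) _ hKt hr1
    -- keyE at topb P
    have hEm := keyE_of ha (IH (topb P) hPm) (by omega) (by omega)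
    have htbm : topb (topb P) = topb P := by rw [hmK, topb_pow]
    have hVm : (a (topb P)) ^ (topb P) = -(a 0) ^ (topb P) := by
      have h' := hEm.2.2; rwa [htbm] at h'
    -- B2
    have hidx : P - lowb P = topb P + ((P - topb P) - lowb (P - topb P)) := by
      rw [hlowP]; omega
    have hB2P : ∀ w : ℂ, w ^ lowb P = -(a (P - lowb P)) ^ lowb P →
        w ^ topb P = -(a 0) ^ topb P := by
      intro w hw
      rw [hidx, hlowP] at hw
      have hwW : w ^ lowb (P - topb P)
          = -((fun j => a (topb P + j)) ((P - topb P) - lowb (P - topb P))) ^ lowb (P - topb P) := hw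
      have hwtop := hB2_t w hwW
      refine chain_pow ⟨Nat.log 2 (P - topb P), rfl⟩ ⟨Nat.log 2 P, hmK⟩ ?_ hwtop ?_
      · calc topb (P - topb P) ≤ P - topb P := topb_le _ hr1
        _ < topb P := hrm
      · exact hVm
    refine ⟨hC, hD, ?_, ?_, hB2P⟩
    · -- A
      intro z hz
      rw [habsP z, hs2P, pow_succ]
      have h1 : ‖z ^ topb P‖ = 1 := by rw [norm_pow, hz]; simp
      have h2 : ‖z ^ topb P - (a 0) ^ topb P‖ ≤ 2 := abs_sub_le_two h1 ha0m
      have h3 := hA_t z hz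
      calc ‖z ^ topb P - (a 0) ^ topb P‖ *
            ∏ i ∈ Finset.range (P - topb P), ‖z - a (topb P + i)‖
          ≤ 2 * (2:ℝ) ^ s2 (P - topb P) := by
            apply mul_le_mul h2 h3 (Finset.prod_nonneg fun i _ => norm_nonneg _)
              (by norm_num)
      _ = (2:ℝ) ^ s2 (P - topb P) * 2 := by ring
    · -- B
      intro z hz
      have h1 : ‖z ^ topb P‖ = 1 := by rw [norm_pow, hz]; simp
      have h2 : ‖z ^ topb P - (a 0) ^ topb P‖ ≤ 2 := abs_sub_le_two h1 ha0m
      have h3 := hA_t z hz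
      have hnn : (0:ℝ) ≤ ∏ i ∈ Finset.range (P - topb P), ‖z - a (topb P + i)‖ :=
        Finset.prod_nonneg fun i _ => norm_nonneg _
      have hpow : (0:ℝ) < 2 ^ s2 (P - topb P) := by positivity
      constructor
      · intro heq
        rw [habsP z, hs2P, pow_succ] at heq
        have ht_eq : ∏ i ∈ Finset.range (P - topb P), ‖z - a (topb P + i)‖
            = 2 ^ s2 (P - topb P) := by nlinarith
        have := (hB_t z hz).mp ht_eq
        rw [hidx, hlowP]
        exact this
      · intro hw
        have hztop := hB2P z hw
        rw [hidx, hlowP] at hw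
        have ht_eq : ∏ i ∈ Finset.range (P - topb P), ‖z - a (topb P + i)‖
            = 2 ^ s2 (P - topb P) := (hB_t z hz).mpr hw
        rw [habsP z, hs2P, pow_succ, ht_eq, hztop, abs_neg_sub_eq_two ha0m]
        ring


section Downstream

noncomputable def logEnergy' (a : ℕ → ℂ) (N : ℕ) : ℝ :=
  ∑ i ∈ Finset.range N, ∑ j ∈ Finset.range N,
    if i ≠ j then Real.log (1 / ‖a i - a j‖) else 0

def IsLejaSeq' (a : ℕ → ℂ) : Prop :=
  (∀ n, ‖a n‖ = 1) ∧
  ∀ n : ℕ, ∀ z : ℂ, ‖z‖ = 1 →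
    ∏ i ∈ Finset.range (n + 1), ‖z - a i‖ ≤
      ∏ i ∈ Finset.range (n + 1), ‖a (n + 1) - a i‖

lemma isLeja_KLja {a : ℕ → ℂ} (h : IsLejaSeq' a) (P : ℕ) : KLja a P :=
  ⟨h.1, fun j _ => h.2 j⟩

/-- Leja products on the circle equal `2 ^ (number of binary ones)`. -/
lemma leja_product {a : ℕ → ℂ} (h : IsLejaSeq' a) {n : ℕ} (hn : 1 ≤ n) :
    ∏ i ∈ Finset.range n, ‖a n - a i‖ = (2:ℝ) ^ s2 n :=
  (keyE_of (isLeja_KLja h (n+1)) (grand n) hn (le_refl _)).1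

/-- symmetric double sum identity -/
lemma double_sum_sym (g : ℕ → ℕ → ℝ) (hsym : ∀ i j, g i j = g j i) (N : ℕ) :
    ∑ i ∈ Finset.range N, ∑ j ∈ Finset.range N, (if i ≠ j then g i j else 0)
      = 2 * ∑ j ∈ Finset.range N, ∑ i ∈ Finset.range j, g i j := by
  induction N with
  | zero => simp
  | succ N ih =>
    rw [Finset.sum_range_succ]
    have hre : ∑ i ∈ Finset.range N, ∑ j ∈ Finset.range (N+1), (if i ≠ j then g i j else 0)
        = ∑ i ∈ Finset.range N, ((∑ j ∈ Finset.range N, (if i ≠ j then g i j else 0))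
            + (if i ≠ N then g i N else 0)) := by
      apply Finset.sum_congr rfl
      intro i _
      rw [Finset.sum_range_succ]
    rw [hre, Finset.sum_add_distrib, ih,
      Finset.sum_range_succ (fun j => ∑ i ∈ Finset.range j, g i j),
      Finset.sum_range_succ (fun j => if (N:ℕ) ≠ j then g N j else 0)]
    have h1 : ∑ i ∈ Finset.range N, (if i ≠ N then g i N else 0)
        = ∑ i ∈ Finset.range N, g i N := by
      apply Finset.sum_congr rfl
      intro i hi
      rw [if_pos (by exact Nat.ne_of_lt (Finset.mem_range.mp hi))]
    have h2 : ∑ j ∈ Finset.range N, (if (N:ℕ) ≠ j then g N j else 0)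
        = ∑ i ∈ Finset.range N, g i N := by
      apply Finset.sum_congr rfl
      intro j hj
      rw [if_pos (Ne.symm (Nat.ne_of_lt (Finset.mem_range.mp hj))), hsym]
    rw [h1, h2]
    simp only [ne_eq, not_true_eq_false, if_false]
    ring

lemma logEnergy_eq {a : ℕ → ℂ} (h : IsLejaSeq' a) (N : ℕ) :
    logEnergy' a N = -2 * Real.log 2 * ∑ n ∈ Finset.range N, (s2 n : ℝ) := by
  rw [logEnergy', double_sum_sym _ (fun i j => by rw [norm_sub_rev])]
  have hterm : ∀ n ∈ Finset.range N, ∑ i ∈ Finset.range n, Real.log (1 / ‖a i - a n‖)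
      = -((s2 n : ℝ) * Real.log 2) := by
    intro n _
    rcases Nat.eq_zero_or_pos n with rfl | hn
    · simp [s2_zero]
    · have hL := leja_product h hn
      have hne : ∀ i ∈ Finset.range n, ‖a n - a i‖ ≠ 0 := by
        intro i hi
        intro h0
        rw [Finset.prod_eq_zero hi h0] at hL
        have : (0:ℝ) < 2 ^ s2 n := by positivity
        linarith [hL ▸ this]
      have : ∑ i ∈ Finset.range n, Real.log (1 / ‖a i - a n‖)
          = -∑ i ∈ Finset.range n, Real.log (‖a n - a i‖) := by
        rw [← Finset.sum_neg_distrib]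
        apply Finset.sum_congr rfl
        intro i hi
        rw [one_div, Real.log_inv, norm_sub_rev]
      rw [this, ← Real.log_prod hne, hL, Real.log_pow]
  calc (2:ℝ) * ∑ n ∈ Finset.range N, ∑ i ∈ Finset.range n, Real.log (1 / ‖a i - a n‖)
      = 2 * ∑ n ∈ Finset.range N, -((s2 n : ℝ) * Real.log 2) := by
        rw [Finset.sum_congr rfl hterm]
    _ = -2 * Real.log 2 * ∑ n ∈ Finset.range N, (s2 n : ℝ) := by
        rw [Finset.sum_neg_distrib, ← Finset.sum_mul]
        ring

end Downstream

section Sums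

lemma sum_s2_shift (K b : ℕ) (hb : b ≤ 2^K) :
    ∑ n ∈ Finset.range (2^K + b), s2 n
      = (∑ n ∈ Finset.range (2^K), s2 n) + ((∑ n ∈ Finset.range b, s2 n) + b) := by
  rw [Finset.sum_range_add]
  congr 1
  have : ∀ i ∈ Finset.range b, s2 (2^K + i) = s2 i + 1 := by
    intro i hi
    exact s2_pow_add K i (lt_of_lt_of_le (Finset.mem_range.mp hi) hb)
  rw [Finset.sum_congr rfl this, Finset.sum_add_distrib]
  simp

lemma sum_s2_two_pow_succ (j : ℕ) :
    ∑ n ∈ Finset.range (2^(j+1)), s2 n = 2 * (∑ n ∈ Finset.range (2^j), s2 n) + 2^j := by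
  have h : (2:ℕ)^(j+1) = 2^j + 2^j := by rw [pow_succ]; ring
  rw [h, sum_s2_shift j (2^j) (le_refl _)]
  ring

lemma sum_s2_four_pow (k : ℕ) :
    ∑ n ∈ Finset.range (4^k), s2 n = k * 4^k := by
  induction k with
  | zero => simp [s2_zero]
  | succ k ih =>
    have h4 : ∀ i : ℕ, (4:ℕ)^i = 2^(2*i) := by
      intro i; rw [show (4:ℕ) = 2^2 by norm_num, ← pow_mul]
    have e1 : ∑ n ∈ Finset.range (2^(2*k+1)), s2 n
        = 2 * (∑ n ∈ Finset.range (4^k), s2 n) + 4^k := by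
      rw [show 2*k+1 = (2*k)+1 from rfl, sum_s2_two_pow_succ, ← h4]
    have e2 : ∑ n ∈ Finset.range (4^(k+1)), s2 n
        = 2 * (∑ n ∈ Finset.range (2^(2*k+1)), s2 n) + 2^(2*k+1) := by
      rw [h4 (k+1), show 2*(k+1) = (2*k+1)+1 by ring, sum_s2_two_pow_succ]
    rw [e2, e1, ih]
    have : (2:ℕ)^(2*k+1) = 2 * 4^k := by rw [pow_succ, ← h4]; ring
    rw [this]
    ring

/-- `N k` -/
lemma geom3 (k : ℕ) : 3 * (∑ j ∈ Finset.range (k+1), 4^j) + 1 = 4^(k+1) := by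
  induction k with
  | zero => simp
  | succ k ih =>
    rw [Finset.sum_range_succ, Nat.mul_add, pow_succ]
    omega

lemma sum_s2_N (k : ℕ) :
    ∑ n ∈ Finset.range (∑ j ∈ Finset.range (k+1), 4^j), s2 n
      = k * (∑ j ∈ Finset.range (k+1), 4^j) := by
  induction k with
  | zero => simp [s2_zero]
  | succ k ih =>
    have hsplit : (∑ j ∈ Finset.range (k+2), 4^j) = 4^(k+1) + ∑ j ∈ Finset.range (k+1), 4^j := by
      rw [Finset.sum_range_succ]; ring
    have hlt : (∑ j ∈ Finset.range (k+1), 4^j) ≤ 4^(k+1) := by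
      have := geom3 k
      omega
    have h4 : (4:ℕ)^(k+1) = 2^(2*(k+1)) := by
      rw [show (4:ℕ) = 2^2 by norm_num, ← pow_mul]
    rw [hsplit, h4, sum_s2_shift _ _ (by omega), ← h4, sum_s2_four_pow, ih]
    ring

end Sums

section FinalLimit
open Filter Topology

theorem main_result (a : ℕ → ℂ) (ha : IsLejaSeq' a) :
    Tendsto (fun k : ℕ =>
        (logEnergy' a (∑ j ∈ Finset.range (k + 1), 4 ^ j)
            + ((∑ j ∈ Finset.range (k + 1), 4 ^ j : ℕ) : ℝ)
              * Real.log ((∑ j ∈ Finset.range (k + 1), 4 ^ j : ℕ) : ℝ))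
          / ((∑ j ∈ Finset.range (k + 1), 4 ^ j : ℕ) : ℝ))
      atTop (𝓝 (Real.log (4 / 3))) := by
  set N : ℕ → ℕ := fun k => ∑ j ∈ Finset.range (k+1), 4^j with hNdef
  have hN1 : ∀ k, 1 ≤ N k := by
    intro k
    have := geom3 k
    have h4 : 4 ≤ 4^(k+1) := by
      calc (4:ℕ) = 4^1 := by norm_num
      _ ≤ 4^(k+1) := Nat.pow_le_pow_right (by norm_num) (by omega)
    simp only [hNdef]
    omega
  have hNpos : ∀ k, (0:ℝ) < (N k : ℝ) := by
    intro k
    exact_mod_cast Nat.lt_of_lt_of_le Nat.zero_lt_one (hN1 k)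
  have hEN : ∀ k, logEnergy' a (N k) = -2 * Real.log 2 * ((k : ℝ) * (N k : ℝ)) := by
    intro k
    rw [logEnergy_eq ha (N k)]
    congr 1
    have : ∑ n ∈ Finset.range (N k), (s2 n : ℝ)
        = ((∑ n ∈ Finset.range (N k), s2 n : ℕ) : ℝ) := by
      push_cast; ring
    rw [this, sum_s2_N k]
    simp only [hNdef]
    push_cast
    ring
  have hlog4 : Real.log 4 = 2 * Real.log 2 := by
    rw [show (4:ℝ) = 2^2 by norm_num, Real.log_pow]
    push_cast; ring
  have funeq : ∀ k, (logEnergy' a (N k) + (N k : ℝ) * Real.log (N k)) / (N k : ℝ)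
      = Real.log ((N k : ℝ) / 4^k) := by
    intro k
    rw [hEN k, Real.log_div (ne_of_gt (hNpos k)) (by positivity), Real.log_pow, hlog4]
    have hNk0 := ne_of_gt (hNpos k)
    field_simp
    ring
  have hNval : ∀ k, (N k : ℝ) = ((4:ℝ)^(k+1) - 1)/3 := by
    intro k
    have := geom3 k
    have hc : (3:ℝ) * (N k : ℝ) + 1 = 4^(k+1) := by
      exact_mod_cast congrArg (fun n : ℕ => (n:ℝ)) this
    linarith
  have hratio : Tendsto (fun k : ℕ => (N k : ℝ) / 4^k) atTop (𝓝 (4/3)) := by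
    have heq : ∀ k : ℕ, (N k : ℝ) / 4^k = 4/3 - (1/3) * (1/4)^k := by
      intro k
      rw [hNval k]
      have h4k : (4:ℝ)^k ≠ 0 := by positivity
      rw [one_div_pow]
      field_simp
      ring
    have hlim : Tendsto (fun k : ℕ => (4:ℝ)/3 - (1/3) * (1/4)^k) atTop (𝓝 (4/3 - (1/3) * 0)) := by
      exact tendsto_const_nhds.sub
        ((tendsto_pow_atTop_nhds_zero_of_lt_one (by norm_num) (by norm_num)).const_mul _)
    rw [show (4:ℝ)/3 - (1/3) * 0 = 4/3 by ring] at hlim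
    exact hlim.congr (fun k => (heq k).symm)
  have hcomp : Tendsto (fun k : ℕ => Real.log ((N k : ℝ) / 4^k)) atTop (𝓝 (Real.log (4/3))) :=
    ((Real.continuousAt_log (by norm_num)).tendsto).comp hratio
  exact hcomp.congr (fun k => (funeq k).symm)

end FinalLimit

end LejaProofAux

theorem leja_logEnergy_limit_along_geometric (a : ℕ → ℂ) (ha : IsLejaSeq a) :
    Tendsto (fun k : ℕ =>
        (logEnergy a (∑ j ∈ Finset.range (k + 1), 4 ^ j)
            + ((∑ j ∈ Finset.range (k + 1), 4 ^ j : ℕ) : ℝ)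
              * Real.log ((∑ j ∈ Finset.range (k + 1), 4 ^ j : ℕ) : ℝ))
          / ((∑ j ∈ Finset.range (k + 1), 4 ^ j : ℕ) : ℝ))
      atTop (𝓝 (Real.log (4 / 3))) := by
  have ha' : LejaProofAux.IsLejaSeq' a := ⟨ha.1, ha.2⟩
  have h := LejaProofAux.main_result a ha'
  have heq : ∀ N, LejaProofAux.logEnergy' a N = logEnergy a N := fun N => rfl
  simpa only [heq] using h
end

section
/- Let N = 2^{n_1} + 2^{n_2} + ⋯ + 2^{n_t} with integers n_1 > n_2 > ⋯ > n_t ≥ 0. Then Σ_{k=1}^{N−1} τ(k) = Σ_{i=1}^{t} (n_i + 2(i−1)) · 2^{n_i − 1}, where the right-hand side is interpreted as a sum of real numbers (so 2^{n_i − 1} = 1/2 when n_i = 0). -/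
open Filter Topology

/-- τ(k): the number of ones in the binary representation of `k`. -/
def tau (k : ℕ) : ℕ := (Nat.digits 2 k).sum

lemma tau_zero : tau 0 = 0 := by simp [tau]

lemma tau_def (k : ℕ) (hk : k ≠ 0) : tau k = k % 2 + tau (k / 2) := by
  unfold tau
  rw [Nat.digits_def' (by norm_num) (Nat.pos_of_ne_zero hk)]
  simp

lemma tau_two_mul_add (k b : ℕ) (hb : b < 2) : tau (2 * k + b) = tau k + b := by
  rcases Nat.eq_zero_or_pos (2 * k + b) with h | h
  · have : k = 0 ∧ b = 0 := by omega
    simp [this.1, this.2, tau_zero]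
  · rw [tau_def _ (by omega)]
    have h1 : (2 * k + b) % 2 = b := by omega
    have h2 : (2 * k + b) / 2 = k := by omega
    rw [h1, h2, Nat.add_comm]

lemma tau_pow (m : ℕ) : tau (2 ^ m) = 1 := by
  induction m with
  | zero => simp [tau]
  | succ m ih =>
    have : (2:ℕ) ^ (m+1) = 2 * 2 ^ m + 0 := by ring
    rw [this, tau_two_mul_add _ _ (by norm_num), ih]

lemma tau_add_pow (m : ℕ) : ∀ a r : ℕ, 2 ^ m ∣ a → r < 2 ^ m →
    tau (a + r) = tau a + tau r := by
  induction m with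
  | zero => intro a r _ hr; interval_cases r; simp [tau_zero]
  | succ m ih =>
    intro a r ha hr
    obtain ⟨q, rfl⟩ := ha
    have hr2 : r / 2 < 2 ^ m := by omega
    have key : 2 ^ (m+1) * q + r = 2 * (2 ^ m * q + r / 2) + r % 2 := by
      have := Nat.div_add_mod r 2; ring_nf; omega
    rw [key, tau_two_mul_add _ _ (Nat.mod_lt _ (by norm_num)),
      ih _ _ ⟨q, rfl⟩ hr2]
    have h1 : 2 ^ (m+1) * q = 2 * (2 ^ m * q) + 0 := by ring
    have h2 : r = 2 * (r / 2) + r % 2 := by omega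
    rw [h1, tau_two_mul_add _ _ (by norm_num)]
    conv_rhs => rw [h2, tau_two_mul_add _ _ (Nat.mod_lt _ (by norm_num))]
    ring

/-- partial sums of tau -/
def S (N : ℕ) : ℕ := ∑ k ∈ Finset.range N, tau k

lemma S_add_pow (a m : ℕ) (ha : 2 ^ m ∣ a) :
    S (a + 2 ^ m) = S a + S (2 ^ m) + tau a * 2 ^ m := by
  unfold S
  rw [Finset.range_eq_Ico, ← Finset.sum_Ico_consecutive _ (Nat.zero_le a) (Nat.le_add_right _ _)]
  have h2 : ∑ i ∈ Finset.Ico a (a + 2 ^ m), tau i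
      = ∑ k ∈ Finset.range (2 ^ m), (tau a + tau k) := by
    rw [Finset.sum_Ico_eq_sum_range]
    simp only [Nat.add_sub_cancel_left]
    exact Finset.sum_congr rfl fun i hi => tau_add_pow m a i ha (Finset.mem_range.mp hi)
  rw [h2, Finset.sum_add_distrib, Finset.sum_const, Finset.card_range,
    ← Finset.range_eq_Ico]
  simp [mul_comm]
  omega

lemma S_pow (m : ℕ) : (S (2 ^ m) : ℝ) = m * 2 ^ m / 2 := by
  induction m with
  | zero => simp [S, tau_zero]
  | succ m ih =>
    have h : (2:ℕ) ^ (m+1) = 2 ^ m + 2 ^ m := by ring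
    rw [h, S_add_pow _ _ dvd_rfl, tau_pow]
    push_cast [ih]
    ring

theorem sum_tau_binary (t : ℕ) (ht : 1 ≤ t) (n : Fin t → ℕ) (hn : StrictAnti n)
    (N : ℕ) (hN : N = ∑ i : Fin t, 2 ^ (n i)) :
    (∑ k ∈ Finset.Icc 1 (N - 1), (tau k : ℝ))
      = ∑ i : Fin t, ((n i : ℝ) + 2 * (i : ℕ)) * (2 : ℝ) ^ (n i) / 2 := by
  -- extend n to ℕ
  set m : ℕ → ℕ := fun i => if h : i < t then n ⟨i, h⟩ else 0 with hm
  have hmono : ∀ i j, i < j → j < t → m j < m i := by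
    intro i j hij hjt
    simp only [hm, dif_pos hjt, dif_pos (hij.trans hjt)]
    exact hn hij
  set A : ℕ → ℕ := fun j => ∑ i ∈ Finset.range j, 2 ^ (m i) with hA
  have hNA : N = A t := by
    rw [hN]
    show _ = ∑ i ∈ Finset.range t, 2 ^ (m i)
    rw [← Fin.sum_univ_eq_sum_range]
    apply Finset.sum_congr rfl
    intro i _
    simp [hm, i.isLt]
  -- key induction
  have key : ∀ j ≤ t, tau (A j) = j ∧
      (S (A j) : ℝ) = ∑ i ∈ Finset.range j, ((m i : ℝ) + 2 * i) * 2 ^ (m i) / 2 := by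
    intro j hj
    induction j with
    | zero => simp [hA, S, tau_zero]
    | succ j ih =>
      obtain ⟨ihtau, ihS⟩ := ih (by omega)
      have hdvd : 2 ^ (m j + 1) ∣ A j := by
        apply Finset.dvd_sum
        intro i hi
        exact pow_dvd_pow 2 (hmono i j (Finset.mem_range.mp hi) (by omega))
      have hAj : A (j + 1) = A j + 2 ^ (m j) := Finset.sum_range_succ _ j
      have hlt : 2 ^ (m j) < 2 ^ (m j + 1) := by
        exact Nat.pow_lt_pow_right (by norm_num) (by omega)
      constructor
      · rw [hAj, tau_add_pow (m j + 1) _ _ hdvd hlt, ihtau, tau_pow]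
      · rw [hAj, S_add_pow _ _ (dvd_trans (pow_dvd_pow 2 (by omega)) hdvd)]
        push_cast [ihS, S_pow, ihtau, Finset.sum_range_succ]
        ring
  obtain ⟨-, hS⟩ := key t le_rfl
  have hNpos : 0 < N := by
    rw [hN]
    apply Finset.sum_pos (fun i _ => Nat.pow_pos (by norm_num))
    exact ⟨⟨0, ht⟩, Finset.mem_univ _⟩
  have hIcc : Finset.range N = insert 0 (Finset.Icc 1 (N - 1)) := by
    ext x
    simp only [Finset.mem_range, Finset.mem_insert, Finset.mem_Icc]
    omega
  have hL : (∑ k ∈ Finset.Icc 1 (N - 1), (tau k : ℝ)) = (S N : ℝ) := by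
    unfold S
    rw [hIcc, Finset.sum_insert (by simp), tau_zero]
    push_cast
    simp
  rw [hL, hNA, hS]
  rw [← Fin.sum_univ_eq_sum_range (fun i => ((m i : ℝ) + 2 * i) * 2 ^ (m i) / 2) t]
  apply Finset.sum_congr rfl
  intro i _
  simp [hm, i.isLt]
end

section
/- Let (x_n)_{n=0}^∞ ⊂ S¹ be a sequence of pairwise distinct points on the unit circle, let ω_N = {x_0, x_1, …, x_{N−1}}, and suppose limsup_{N→∞} E_0(ω_N)/(N log N) = −1. Then lim_{N→∞} E_0(ω_N)/(N log N) = −1, and the normalized counting measures (1/N) Σ_{k=0}^{N−1} δ_{x_k} converge in the weak-star sense (i.e., tested against continuous functions on S¹) to the normalized arclength measure σ on S¹. -/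
open Filter Topology

section Aux
open Finset Complex


lemma lemB {w : ℂ} (hw : ‖w‖ = 1) {r : ℝ} (hr0 : 0 < r) (hr1 : r < 1) :
    r * ‖1 - w‖ ≤ ‖1 - (r : ℂ) * w‖ := by
  have hsq : w.re ^ 2 + w.im ^ 2 = 1 := by
    have h := Complex.sq_norm w
    rw [hw, one_pow] at h
    rw [Complex.normSq_apply] at h; nlinarith [h]
  have h1 : (‖1 - (r:ℂ) * w‖)^2 = 1 - 2*r*w.re + r^2 := by
    rw [Complex.sq_norm, Complex.normSq_apply]
    simp only [Complex.sub_re, Complex.sub_im, Complex.mul_re, Complex.mul_im,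
      Complex.one_re, Complex.one_im, Complex.ofReal_re, Complex.ofReal_im]
    nlinarith [hsq]
  have h2 : (‖1 - w‖)^2 = 2 - 2*w.re := by
    rw [Complex.sq_norm, Complex.normSq_apply]
    simp only [Complex.sub_re, Complex.sub_im, Complex.one_re, Complex.one_im]
    nlinarith [hsq]
  have hre : w.re ≤ 1 := by nlinarith [sq_nonneg w.im]
  refine le_of_pow_le_pow_left₀ (two_ne_zero) (norm_nonneg _) ?_
  have hA := norm_nonneg (1 - w)
  have hkey : 0 < (1 - r) * (1 + r - 2 * r * w.re) := mul_pos (by linarith) (by nlinarith)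
  rw [mul_pow, h1, h2]; nlinarith [hkey]
lemma lemA (x : ℕ → ℂ) (hx : ∀ n, ‖x n‖ = 1) {r : ℝ} (hr0 : 0 < r) (hr1 : r < 1)
    (N : ℕ) :
    HasSum (fun m : ℕ => r ^ m / m * Complex.normSq (∑ i ∈ Finset.range N, x i ^ m))
      (∑ i ∈ Finset.range N, ∑ j ∈ Finset.range N,
        -Real.log (‖1 - (r : ℂ) * (x i * (starRingEnd ℂ) (x j))‖)) := by
  have hz : ∀ i j : ℕ, ‖(r : ℂ) * (x i * (starRingEnd ℂ) (x j))‖ < 1 := by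
    intro i j
    simp only [norm_mul, Complex.norm_real, Real.norm_eq_abs, Complex.norm_conj, hx,
      mul_one, abs_of_pos hr0]
    exact hr1
  have h : HasSum
      (fun m : ℕ => ∑ i ∈ Finset.range N, ∑ j ∈ Finset.range N,
        ((r : ℂ) * (x i * (starRingEnd ℂ) (x j))) ^ m / m)
      (∑ i ∈ Finset.range N, ∑ j ∈ Finset.range N,
        -Complex.log (1 - (r : ℂ) * (x i * (starRingEnd ℂ) (x j)))) :=
    hasSum_sum fun i _ => hasSum_sum fun j _ =>
      Complex.hasSum_taylorSeries_neg_log (hz i j)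
  have h2 := Complex.hasSum_re h
  have hterm : ∀ m : ℕ,
      (∑ i ∈ Finset.range N, ∑ j ∈ Finset.range N,
        ((r : ℂ) * (x i * (starRingEnd ℂ) (x j))) ^ m / m).re
      = r ^ m / m * Complex.normSq (∑ i ∈ Finset.range N, x i ^ m) := by
    intro m
    have e1 : ∑ i ∈ Finset.range N, ∑ j ∈ Finset.range N,
        ((r : ℂ) * (x i * (starRingEnd ℂ) (x j))) ^ m / m
        = ((r : ℂ) ^ m / m) * ((∑ i ∈ Finset.range N, x i ^ m) *
          (starRingEnd ℂ) (∑ j ∈ Finset.range N, x j ^ m)) := by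
      rw [map_sum, Finset.sum_mul_sum, Finset.mul_sum]
      refine Finset.sum_congr rfl fun i _ => ?_
      rw [Finset.mul_sum]
      refine Finset.sum_congr rfl fun j _ => ?_
      rw [map_pow]; ring
    rw [e1, Complex.mul_conj]
    have : ((r : ℂ) ^ m / m) * (Complex.normSq (∑ i ∈ Finset.range N, x i ^ m) : ℂ)
        = ((r ^ m / m * Complex.normSq (∑ i ∈ Finset.range N, x i ^ m) : ℝ) : ℂ) := by
      push_cast; ring
    rw [this, Complex.ofReal_re]
  have hval : (∑ i ∈ Finset.range N, ∑ j ∈ Finset.range N,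
      -Complex.log (1 - (r : ℂ) * (x i * (starRingEnd ℂ) (x j)))).re
      = ∑ i ∈ Finset.range N, ∑ j ∈ Finset.range N,
        -Real.log (‖1 - (r : ℂ) * (x i * (starRingEnd ℂ) (x j))‖) := by
    rw [Complex.re_sum]
    refine Finset.sum_congr rfl fun i _ => ?_
    rw [Complex.re_sum]
    refine Finset.sum_congr rfl fun j _ => ?_
    rw [Complex.neg_re, Complex.log_re]
  rw [hval] at h2
  exact (funext hterm : _) ▸ h2

lemma lemC (x : ℕ → ℂ) (hx : ∀ n, ‖x n‖ = 1) (hinj : Function.Injective x)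
    {r : ℝ} (hr0 : 0 < r) (hr1 : r < 1) (N k : ℕ) :
    r ^ k / k * Complex.normSq (∑ i ∈ Finset.range N, x i ^ k) ≤
      logEnergy x N + N ^ 2 * Real.log (1 / r) + N * Real.log (1 / (1 - r)) := by
  have hA := lemA x hx hr0 hr1 N
  have hlr : 0 ≤ Real.log (1 / r) := Real.log_nonneg (by rw [le_div_iff₀ hr0]; linarith)
  refine le_trans (le_hasSum hA k fun m _ => mul_nonneg
    (div_nonneg (pow_nonneg hr0.le m) m.cast_nonneg) (Complex.normSq_nonneg _)) ?_
  have hbound : ∀ i ∈ Finset.range N, ∀ j ∈ Finset.range N,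
      -Real.log (‖1 - (r : ℂ) * (x i * (starRingEnd ℂ) (x j))‖) ≤
        (if i ≠ j then Real.log (1 / ‖x i - x j‖) else 0)
        + ((if i = j then Real.log (1 / (1 - r)) else 0) + Real.log (1 / r)) := by
    intro i _ j _
    rcases eq_or_ne i j with rfl | hij
    · simp only [ne_eq, not_true_eq_false, if_false, if_pos rfl, ite_self]
      have : x i * (starRingEnd ℂ) (x i) = 1 := by
        rw [Complex.mul_conj]
        norm_cast
        rw [Complex.normSq_eq_norm_sq, hx i, one_pow]
      rw [this, mul_one]
      have : (1 : ℂ) - (r : ℂ) = ((1 - r : ℝ) : ℂ) := by push_cast; ring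
      rw [this, Complex.norm_real, Real.norm_eq_abs, abs_of_pos (by linarith), one_div, Real.log_inv,
        one_div, Real.log_inv]
      have := Real.log_nonpos hr0.le hr1.le
      simp only [if_true]
      linarith
    · simp only [if_pos hij, if_neg hij]
      have hxne : x i - x j ≠ 0 := sub_ne_zero.mpr (fun h => hij (hinj h))
      have hB : 0 < ‖x i - x j‖ := by
        simpa [norm_pos_iff] using hxne
      have hw : ‖x i * (starRingEnd ℂ) (x j)‖ = 1 := by
        simp [Complex.norm_conj, hx]
      have hfac : ‖1 - x i * (starRingEnd ℂ) (x j)‖ = ‖x i - x j‖ := by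
        have : x j * (x i * (starRingEnd ℂ) (x j) - 1) = x i - x j := by
          have h1 : x j * (starRingEnd ℂ) (x j) = 1 := by
            rw [Complex.mul_conj]; norm_cast
            rw [Complex.normSq_eq_norm_sq, hx j, one_pow]
          calc x j * (x i * (starRingEnd ℂ) (x j) - 1)
              = x i * (x j * (starRingEnd ℂ) (x j)) - x j := by ring
            _ = x i - x j := by rw [h1, mul_one]
        calc ‖1 - x i * (starRingEnd ℂ) (x j)‖
            = ‖x i * (starRingEnd ℂ) (x j) - 1‖ := (norm_sub_rev _ _)
          _ = ‖x j‖ * ‖x i * (starRingEnd ℂ) (x j) - 1‖ := by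
              rw [hx j, one_mul]
          _ = ‖x i - x j‖ := by rw [← norm_mul, this]
      have hkey : r * ‖x i - x j‖ ≤
          ‖1 - (r : ℂ) * (x i * (starRingEnd ℂ) (x j))‖ := by
        rw [← hfac]
        exact lemB hw hr0 hr1
      have hlog : Real.log (r * ‖x i - x j‖) ≤
          Real.log (‖1 - (r : ℂ) * (x i * (starRingEnd ℂ) (x j))‖) :=
        Real.log_le_log (by positivity) hkey
      rw [Real.log_mul (ne_of_gt hr0) (ne_of_gt hB)] at hlog
      rw [one_div, Real.log_inv, one_div, Real.log_inv]
      linarith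
  calc (∑ i ∈ Finset.range N, ∑ j ∈ Finset.range N,
        -Real.log (‖1 - (r : ℂ) * (x i * (starRingEnd ℂ) (x j))‖))
      ≤ ∑ i ∈ Finset.range N, ∑ j ∈ Finset.range N,
        ((if i ≠ j then Real.log (1 / ‖x i - x j‖) else 0)
        + ((if i = j then Real.log (1 / (1 - r)) else 0) + Real.log (1 / r))) :=
        Finset.sum_le_sum fun i hi => Finset.sum_le_sum (hbound i hi)
    _ = ∑ i ∈ Finset.range N, ((∑ j ∈ Finset.range N,
          if i ≠ j then Real.log (1 / ‖x i - x j‖) else 0)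
          + (Real.log (1 / (1 - r)) + N * Real.log (1 / r))) := by
        refine Finset.sum_congr rfl fun i hi => ?_
        rw [Finset.sum_add_distrib, Finset.sum_add_distrib, Finset.sum_const,
          Finset.card_range, nsmul_eq_mul,
          (Finset.sum_ite_eq (Finset.range N) i
            (fun _ => Real.log (1 / (1 - r)))).trans (if_pos hi)]
    _ = logEnergy x N + ((N : ℝ) * Real.log (1 / (1 - r)) + N * (N * Real.log (1 / r))) := by
        rw [Finset.sum_add_distrib, Finset.sum_const, Finset.card_range, nsmul_eq_mul, logEnergy]
        ring
    _ = logEnergy x N + N ^ 2 * Real.log (1 / r) + N * Real.log (1 / (1 - r)) := by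
        push_cast; ring
lemma lemD {f : ℕ → ℝ} (h : Filter.limsup f atTop = -1) :
    IsBoundedUnder (· ≤ ·) atTop f := by
  by_contra hb
  have he : {a : ℝ | ∀ᶠ n in atTop, f n ≤ a} = ∅ := by
    rw [Set.eq_empty_iff_forall_notMem]
    intro a ha
    exact hb ⟨a, eventually_map.mpr ha⟩
  rw [Filter.limsup_eq, he, Real.sInf_empty] at h
  norm_num at h

-- Part 1
lemma part1 (x : ℕ → ℂ) (hx : ∀ n, ‖x n‖ = 1) (hinj : Function.Injective x)
    (hls : Filter.limsup (fun N : ℕ => logEnergy x N / ((N : ℝ) * Real.log N)) atTop = -1) :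
    Tendsto (fun N : ℕ => logEnergy x N / ((N : ℝ) * Real.log N)) atTop (𝓝 (-1)) := by
  set f : ℕ → ℝ := fun N => logEnergy x N / ((N : ℝ) * Real.log N) with hf
  have hlow : ∀ᶠ N : ℕ in atTop, -1 - 2 / Real.log (N : ℝ) ≤ f N := by
    filter_upwards [eventually_ge_atTop 2] with N hN
    have hN2 : (2 : ℝ) ≤ (N : ℝ) := by exact_mod_cast hN
    have hNpos : (0 : ℝ) < N := by linarith
    have hN1 : (0 : ℝ) < (N : ℝ) - 1 := by linarith
    have hlogpos : 0 < Real.log N := Real.log_pos (by linarith)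
    set r : ℝ := ((N : ℝ) - 1) / N with hr
    have hr0 : 0 < r := div_pos hN1 hNpos
    have hr1 : r < 1 := (div_lt_one hNpos).mpr (by linarith)
    have key := lemC x hx hinj hr0 hr1 N 0
    have hL0 : r ^ 0 / ((0 : ℕ) : ℝ) * Complex.normSq (∑ i ∈ Finset.range N, x i ^ 0) = 0 := by
      simp
    rw [hL0] at key
    have h1r : 1 / r = (N : ℝ) / ((N : ℝ) - 1) := by
      rw [hr, one_div_div]
    have h1mr : 1 - r = 1 / N := by
      rw [hr, eq_div_iff hNpos.ne', sub_mul, div_mul_cancel₀ _ hNpos.ne']; ring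
    have hlog1 : Real.log (1 / r) ≤ 1 / ((N : ℝ) - 1) := by
      rw [h1r]
      have := Real.log_le_sub_one_of_pos (div_pos hNpos hN1)
      have heq : (N : ℝ) / ((N : ℝ) - 1) - 1 = 1 / ((N : ℝ) - 1) := by field_simp; ring
      linarith [heq ▸ this]
    have hlog2 : Real.log (1 / (1 - r)) = Real.log N := by
      rw [h1mr, one_div_one_div]
    have hE : -((N : ℝ) * Real.log N) - 2 * N ≤ logEnergy x N := by
      have hsq : ((N : ℝ)) ^ 2 * Real.log (1 / r) ≤ 2 * N := by
        have : ((N : ℝ)) ^ 2 * Real.log (1 / r) ≤ (N : ℝ) ^ 2 * (1 / ((N : ℝ) - 1)) :=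
          mul_le_mul_of_nonneg_left hlog1 (by positivity)
        have h2 : (N : ℝ) ^ 2 * (1 / ((N : ℝ) - 1)) ≤ 2 * N := by
          rw [mul_one_div, div_le_iff₀ hN1]
          nlinarith [hN2, hNpos]
        linarith
      rw [hlog2] at key
      nlinarith [key]
    have hd : (0 : ℝ) < (N : ℝ) * Real.log N := mul_pos hNpos hlogpos
    have hdiv : (-((N : ℝ) * Real.log N) - 2 * N) / ((N : ℝ) * Real.log N) ≤ f N := by
      show _ ≤ logEnergy x N / ((N : ℝ) * Real.log N)
      exact (div_le_div_iff_of_pos_right hd).mpr hE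
    have heq : (-((N : ℝ) * Real.log N) - 2 * N) / ((N : ℝ) * Real.log N)
        = -1 - 2 / Real.log (N : ℝ) := by
      field_simp
    linarith [heq ▸ hdiv]
  have htlow : Tendsto (fun N : ℕ => -1 - 2 / Real.log (N : ℝ)) atTop (𝓝 (-1)) := by
    have hlog : Tendsto (fun N : ℕ => Real.log (N : ℝ)) atTop atTop :=
      Real.tendsto_log_atTop.comp tendsto_natCast_atTop_atTop
    have h2 : Tendsto (fun N : ℕ => 2 / Real.log (N : ℝ)) atTop (𝓝 0) :=
      tendsto_const_nhds.div_atTop hlog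
    have := tendsto_const_nhds (x := (-1 : ℝ)) (f := atTop (α := ℕ)) |>.sub h2
    simpa using this
  have hbddle : IsBoundedUnder (· ≤ ·) atTop f := lemD hls
  have hbddge : IsBoundedUnder (· ≥ ·) atTop f := by
    refine ⟨-4, ?_⟩
    rw [eventually_map]
    filter_upwards [hlow, eventually_ge_atTop 3] with N h1 h3
    have h3' : (3 : ℝ) ≤ (N : ℝ) := by exact_mod_cast h3
    have hl1 : 1 ≤ Real.log (N : ℝ) := by
      rw [Real.le_log_iff_exp_le (by linarith)]
      exact (Real.exp_one_lt_d9).le.trans (by linarith)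
    have : 2 / Real.log (N : ℝ) ≤ 2 := by
      rw [div_le_iff₀ (by linarith)]
      linarith
    linarith
  have hliminf : liminf f atTop = -1 := by
    refine le_antisymm (hls ▸ liminf_le_limsup hbddle hbddge) ?_
    have := liminf_le_liminf hlow (htlow.isBoundedUnder_ge) (hbddle.isCoboundedUnder_ge)
    rwa [htlow.liminf_eq] at this
  exact tendsto_of_liminf_eq_limsup hliminf hls hbddle hbddge

lemma hE0nonpos (x : ℕ → ℂ)
    (hls : Filter.limsup (fun N : ℕ => logEnergy x N / ((N : ℝ) * Real.log N)) atTop = -1) :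
    ∀ᶠ N : ℕ in atTop, logEnergy x N ≤ 0 := by
  have hbdd := lemD hls
  have hneg := eventually_lt_of_limsup_lt (b := 0) (by rw [hls]; norm_num) hbdd
  filter_upwards [hneg, eventually_ge_atTop 2] with N h1 h2
  have hN2 : (2 : ℝ) ≤ (N : ℝ) := by exact_mod_cast h2
  have hd : (0 : ℝ) < (N : ℝ) * Real.log N :=
    mul_pos (by linarith) (Real.log_pos (by linarith))
  rcases div_neg_iff.mp h1 with ⟨_, h⟩ | ⟨h, _⟩
  · linarith
  · linarith

lemma lemWeyl (x : ℕ → ℂ) (hx : ∀ n, ‖x n‖ = 1) (hinj : Function.Injective x)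
    (hls : Filter.limsup (fun N : ℕ => logEnergy x N / ((N : ℝ) * Real.log N)) atTop = -1)
    (k : ℕ) (hk : 1 ≤ k) :
    Tendsto (fun N : ℕ => ‖∑ i ∈ Finset.range N, x i ^ k‖ / N) atTop (𝓝 0) := by
  set g : ℕ → ℝ := fun N => ‖∑ i ∈ Finset.range N, x i ^ k‖ / N with hg
  have hgnn : ∀ N, 0 ≤ g N := fun N => div_nonneg (norm_nonneg _) (Nat.cast_nonneg N)
  rw [tendsto_order]
  constructor
  · intro a ha
    exact Eventually.of_forall fun N => lt_of_lt_of_le ha (hgnn N)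
  · intro ε hε
    -- choose δ and r
    set δ : ℝ := min (ε ^ 2 / (4 * k)) (Real.log 2 / k) with hδ
    have hkpos : (0 : ℝ) < k := by exact_mod_cast hk
    have hδ0 : 0 < δ := lt_min (by positivity) (div_pos (Real.log_pos (by norm_num)) hkpos)
    set r : ℝ := Real.exp (-δ) with hr
    have hr0 : 0 < r := Real.exp_pos _
    have hr1 : r < 1 := by
      rw [hr, Real.exp_lt_one_iff]
      linarith
    have hrk : (1 : ℝ) / 2 ≤ r ^ k := by
      rw [hr, ← Real.exp_nat_mul]
      have h1 : -Real.log 2 ≤ (k : ℝ) * (-δ) := by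
        have : (k : ℝ) * δ ≤ Real.log 2 := by
          calc (k : ℝ) * δ ≤ (k : ℝ) * (Real.log 2 / k) :=
            mul_le_mul_of_nonneg_left (min_le_right _ _) hkpos.le
          _ = Real.log 2 := by field_simp
        linarith
      calc (1 : ℝ) / 2 = Real.exp (-Real.log 2) := by
            rw [Real.exp_neg, Real.exp_log] <;> norm_num
        _ ≤ Real.exp ((k : ℝ) * (-δ)) := Real.exp_le_exp.mpr h1
    have hlogr : Real.log (1 / r) = δ := by
      rw [one_div, hr, ← Real.exp_neg, Real.log_exp, neg_neg]
    set C : ℝ := Real.log (1 / (1 - r)) with hC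
    -- eventual bound
    have hCsmall : ∀ᶠ N : ℕ in atTop, 2 * k * C / N ≤ ε ^ 2 / 4 := by
      have : Tendsto (fun N : ℕ => 2 * k * C / N) atTop (𝓝 0) :=
        tendsto_const_nhds.div_atTop tendsto_natCast_atTop_atTop
      exact this.eventually_le_const (by positivity) |>.mono (fun N h => h)
    filter_upwards [hE0nonpos x hls, hCsmall, eventually_ge_atTop 1] with N hE0 hCN hN1
    have hNpos : (0 : ℝ) < N := by exact_mod_cast hN1
    have key := lemC x hx hinj hr0 hr1 N k
    rw [hlogr, ← hC] at key
    set nS : ℝ := Complex.normSq (∑ i ∈ Finset.range N, x i ^ k) with hnSdef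
    have hnSnn : 0 ≤ nS := Complex.normSq_nonneg _
    have h2k : 1 / (2 * (k : ℝ)) * nS ≤ r ^ k / k * nS := by
      apply mul_le_mul_of_nonneg_right _ hnSnn
      rw [div_le_div_iff₀ (by positivity) hkpos]
      nlinarith [hrk, hkpos]
    have h3 : 1 / (2 * (k : ℝ)) * nS ≤ (N : ℝ) ^ 2 * δ + N * C :=
      (h2k.trans key).trans (by linarith [hE0])
    have hnS : nS ≤ 2 * k * ((N : ℝ) ^ 2 * δ + N * C) := by
      calc nS = 2 * (k : ℝ) * (1 / (2 * (k : ℝ)) * nS) := by field_simp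
        _ ≤ 2 * k * ((N : ℝ) ^ 2 * δ + N * C) :=
          mul_le_mul_of_nonneg_left h3 (by positivity)
    have hfin : g N ^ 2 < ε ^ 2 := by
      have hgsq : g N ^ 2 = nS / (N : ℝ) ^ 2 := by
        rw [hg, hnSdef, div_pow, Complex.sq_norm]
      rw [hgsq]
      have hδb : 2 * k * δ ≤ ε ^ 2 / 2 := by
        have : δ ≤ ε ^ 2 / (4 * k) := min_le_left _ _
        calc 2 * (k : ℝ) * δ ≤ 2 * k * (ε ^ 2 / (4 * k)) :=
            mul_le_mul_of_nonneg_left this (by positivity)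
          _ = ε ^ 2 / 2 := by field_simp; ring
      rw [div_lt_iff₀ (by positivity)]
      calc nS ≤ 2 * k * ((N : ℝ) ^ 2 * δ + N * C) := hnS
        _ = 2 * k * δ * N ^ 2 + (2 * k * C / N) * N ^ 2 := by field_simp
        _ ≤ (ε ^ 2 / 2) * N ^ 2 + (ε ^ 2 / 4) * N ^ 2 := by nlinarith [hδb, hCN, sq_nonneg (N:ℝ)]
        _ < ε ^ 2 * N ^ 2 := by
            have hp : 0 < ε ^ 2 * (N : ℝ) ^ 2 := by positivity
            linarith
    exact lt_of_pow_lt_pow_left₀ 2 hε.le hfin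

lemma lemWeylZ (x : ℕ → ℂ) (hx : ∀ n, ‖x n‖ = 1) (hinj : Function.Injective x)
    (hls : Filter.limsup (fun N : ℕ => logEnergy x N / ((N : ℝ) * Real.log N)) atTop = -1)
    (n : ℤ) (hn : n ≠ 0) :
    Tendsto (fun N : ℕ => ‖∑ i ∈ Finset.range N, x i ^ n‖ / N) atTop (𝓝 0) := by
  have hm : 1 ≤ n.natAbs := Int.natAbs_pos.mpr hn
  have hinv : ∀ z : ℂ, ‖z‖ = 1 → z⁻¹ = (starRingEnd ℂ) z := by
    intro z hz
    rw [Complex.inv_def, Complex.normSq_eq_norm_sq, hz]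
    simp
  rcases lt_or_gt_of_ne hn with hneg | hpos
  · have heq : ∀ N : ℕ, ‖∑ i ∈ Finset.range N, x i ^ n‖
        = ‖∑ i ∈ Finset.range N, x i ^ n.natAbs‖ := by
      intro N
      have : ∀ i, x i ^ n = (starRingEnd ℂ) (x i ^ n.natAbs) := by
        intro i
        have h1 : n = -(n.natAbs : ℤ) := by
          rw [Int.ofNat_natAbs_of_nonpos hneg.le]; ring
        have h2 : x i ^ n = (x i ^ (n.natAbs : ℕ))⁻¹ := by
          rw [← zpow_natCast, ← zpow_neg, ← h1]
        rw [h2, hinv _ (by rw [norm_pow, hx, one_pow])]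
      simp_rw [this, ← map_sum, Complex.norm_conj]
    simp_rw [heq]
    exact lemWeyl x hx hinj hls n.natAbs hm
  · have heq : ∀ N : ℕ, ‖∑ i ∈ Finset.range N, x i ^ n‖
        = ‖∑ i ∈ Finset.range N, x i ^ n.natAbs‖ := by
      intro N
      congr 1
      refine Finset.sum_congr rfl fun i _ => ?_
      rw [← zpow_natCast, Int.natAbs_of_nonneg hpos.le]
    simp_rw [heq]
    exact lemWeyl x hx hinj hls n.natAbs hm


/-- The test property: empirical averages converge to the circle average. -/
def PP (θ : ℕ → AddCircle (2 * Real.pi)) (g : C(AddCircle (2 * Real.pi), ℂ)) : Prop :=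
  Tendsto (fun N : ℕ => ((N : ℂ))⁻¹ * ∑ k ∈ Finset.range N, g (θ k)) atTop
    (𝓝 (((2 * Real.pi : ℝ) : ℂ)⁻¹ *
      ∫ t in (0 : ℝ)..(2 * Real.pi), g ((t : ℝ) : AddCircle (2 * Real.pi))))

lemma PP_cont (g : C(AddCircle (2 * Real.pi), ℂ)) :
    Continuous fun t : ℝ => g ((t : ℝ) : AddCircle (2 * Real.pi)) :=
  g.continuous.comp (AddCircle.continuous_mk' _)

lemma PP_zero (θ : ℕ → AddCircle (2 * Real.pi)) : PP θ 0 := by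
  unfold PP
  simp only [ContinuousMap.zero_apply, Finset.sum_const_zero, mul_zero]
  rw [intervalIntegral.integral_zero, mul_zero]
  exact tendsto_const_nhds

lemma PP_add {θ : ℕ → AddCircle (2 * Real.pi)} {g h : C(AddCircle (2 * Real.pi), ℂ)}
    (hg : PP θ g) (hh : PP θ h) : PP θ (g + h) := by
  unfold PP at *
  have := hg.add hh
  convert this using 2 with N
  · simp only [ContinuousMap.add_apply, Finset.sum_add_distrib]
    ring
  · simp only [ContinuousMap.add_apply]
    rw [intervalIntegral.integral_add ((PP_cont g).intervalIntegrable _ _)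
      ((PP_cont h).intervalIntegrable _ _)]
    ring
    
lemma PP_smul {θ : ℕ → AddCircle (2 * Real.pi)} (c : ℂ) {g : C(AddCircle (2 * Real.pi), ℂ)}
    (hg : PP θ g) : PP θ (c • g) := by
  unfold PP at *
  have hfun : ∀ N : ℕ, c * (((N : ℂ))⁻¹ * ∑ k ∈ Finset.range N, g (θ k))
      = ((N : ℂ))⁻¹ * ∑ k ∈ Finset.range N, (c • g) (θ k) := by
    intro N
    simp only [ContinuousMap.smul_apply, smul_eq_mul]
    rw [← Finset.mul_sum]
    ring
  have hint : (((2 * Real.pi : ℝ) : ℂ))⁻¹ *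
      ∫ t in (0:ℝ)..(2 * Real.pi), (c • g) ((t : ℝ) : AddCircle (2 * Real.pi))
      = c * ((((2 * Real.pi : ℝ) : ℂ))⁻¹ *
        ∫ t in (0:ℝ)..(2 * Real.pi), g ((t : ℝ) : AddCircle (2 * Real.pi))) := by
    simp only [ContinuousMap.smul_apply, smul_eq_mul]
    rw [intervalIntegral.integral_const_mul]
    ring
  rw [hint]
  exact (hg.const_mul c).congr hfun

lemma PP_closure [Fact (0 < 2 * Real.pi)] {θ : ℕ → AddCircle (2 * Real.pi)}
    {g : C(AddCircle (2 * Real.pi), ℂ)}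
    (hg : g ∈ closure {h : C(AddCircle (2 * Real.pi), ℂ) | PP θ h}) : PP θ g := by
  unfold PP
  rw [Metric.tendsto_atTop]
  intro ε hε
  obtain ⟨p, hpP, hgp⟩ := Metric.mem_closure_iff.mp hg (ε / 4) (by linarith)
  rw [dist_comm, dist_eq_norm] at hgp
  have hp : PP θ p := hpP
  unfold PP at hp
  rw [Metric.tendsto_atTop] at hp
  obtain ⟨N₀, hN₀⟩ := hp (ε / 4) (by linarith)
  refine ⟨max N₀ 1, fun N hN => ?_⟩
  have hN1 : 1 ≤ N := le_trans (le_max_right _ _) hN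
  have hNN₀ : N₀ ≤ N := le_trans (le_max_left _ _) hN
  have hNpos : (0 : ℝ) < N := by exact_mod_cast hN1
  -- bound 1 : sums
  have hb1 : ‖((N : ℂ))⁻¹ * ∑ k ∈ Finset.range N, g (θ k)
      - ((N : ℂ))⁻¹ * ∑ k ∈ Finset.range N, p (θ k)‖ ≤ ‖p - g‖ := by
    rw [← mul_sub, ← Finset.sum_sub_distrib]
    rw [norm_mul, norm_inv, Complex.norm_natCast]
    calc (N : ℝ)⁻¹ * ‖∑ k ∈ Finset.range N, (g (θ k) - p (θ k))‖
        ≤ (N : ℝ)⁻¹ * ∑ k ∈ Finset.range N, ‖g (θ k) - p (θ k)‖ := by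
          apply mul_le_mul_of_nonneg_left (norm_sum_le _ _) (by positivity)
      _ ≤ (N : ℝ)⁻¹ * ∑ k ∈ Finset.range N, ‖p - g‖ := by
          apply mul_le_mul_of_nonneg_left _ (by positivity)
          apply Finset.sum_le_sum
          intro k _
          have := ContinuousMap.norm_coe_le_norm (g - p) (θ k)
          rw [ContinuousMap.sub_apply] at this
          calc ‖g (θ k) - p (θ k)‖ ≤ ‖g - p‖ := this
            _ = ‖p - g‖ := norm_sub_rev _ _
      _ = ‖p - g‖ := by
          rw [Finset.sum_const, Finset.card_range, nsmul_eq_mul]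
          field_simp
  -- bound 2 : integrals
  have hπpos : (0 : ℝ) < 2 * Real.pi := by positivity
  have hb2 : ‖((((2 * Real.pi : ℝ) : ℂ))⁻¹ * ∫ t in (0:ℝ)..(2 * Real.pi), p ((t : ℝ) : AddCircle (2 * Real.pi)))
      - ((((2 * Real.pi : ℝ) : ℂ))⁻¹ * ∫ t in (0:ℝ)..(2 * Real.pi), g ((t : ℝ) : AddCircle (2 * Real.pi)))‖
      ≤ ‖p - g‖ := by
    rw [← mul_sub, ← intervalIntegral.integral_sub ((PP_cont p).intervalIntegrable _ _)
      ((PP_cont g).intervalIntegrable _ _)]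
    rw [norm_mul, norm_inv]
    have hnorm : ‖(((2 * Real.pi : ℝ) : ℂ))‖ = 2 * Real.pi := by
      rw [Complex.norm_real, Real.norm_of_nonneg hπpos.le]
    rw [hnorm]
    have hint : ‖∫ t in (0:ℝ)..(2 * Real.pi),
        (p ((t : ℝ) : AddCircle (2 * Real.pi)) - g ((t : ℝ) : AddCircle (2 * Real.pi)))‖
        ≤ ‖p - g‖ * |2 * Real.pi - 0| := by
      apply intervalIntegral.norm_integral_le_of_norm_le_const
      intro t _
      have := ContinuousMap.norm_coe_le_norm (p - g) ((t : ℝ) : AddCircle (2 * Real.pi))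
      rwa [ContinuousMap.sub_apply] at this
    rw [sub_zero, abs_of_pos hπpos] at hint
    calc (2 * Real.pi)⁻¹ * ‖∫ t in (0:ℝ)..(2 * Real.pi),
        (p ((t : ℝ) : AddCircle (2 * Real.pi)) - g ((t : ℝ) : AddCircle (2 * Real.pi)))‖
        ≤ (2 * Real.pi)⁻¹ * (‖p - g‖ * (2 * Real.pi)) :=
          mul_le_mul_of_nonneg_left hint (by positivity)
      _ = ‖p - g‖ := by field_simp
  have h3 := hN₀ N hNN₀
  have htri := dist_triangle4 (((N : ℂ))⁻¹ * ∑ k ∈ Finset.range N, g (θ k))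
    (((N : ℂ))⁻¹ * ∑ k ∈ Finset.range N, p (θ k))
    ((((2 * Real.pi : ℝ) : ℂ))⁻¹ * ∫ t in (0:ℝ)..(2 * Real.pi), p ((t : ℝ) : AddCircle (2 * Real.pi)))
    ((((2 * Real.pi : ℝ) : ℂ))⁻¹ * ∫ t in (0:ℝ)..(2 * Real.pi), g ((t : ℝ) : AddCircle (2 * Real.pi)))
  rw [dist_eq_norm, dist_eq_norm, dist_eq_norm, dist_eq_norm] at htri
  rw [dist_eq_norm]
  have h3' : ‖(((N : ℂ))⁻¹ * ∑ k ∈ Finset.range N, p (θ k))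
      - ((((2 * Real.pi : ℝ) : ℂ))⁻¹ * ∫ t in (0:ℝ)..(2 * Real.pi), p ((t : ℝ) : AddCircle (2 * Real.pi)))‖ ≤ ε / 4 := by
    rw [← dist_eq_norm]
    exact h3.le
  linarith [htri, hb1, hb2, h3', hgp]

lemma hfour_val (n : ℤ) (t : ℝ) : (fourier n) ((t : ℝ) : AddCircle (2 * Real.pi))
    = Complex.exp ((n : ℂ) * Complex.I * t) := by
  rw [fourier_coe_apply]
  congr 1
  have hπ : (Real.pi : ℂ) ≠ 0 := Complex.ofReal_ne_zero.mpr Real.pi_ne_zero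
  push_cast
  field_simp

lemma PP_fourier (x : ℕ → ℂ) (hx : ∀ n, ‖x n‖ = 1)
    (hweyl : ∀ n : ℤ, n ≠ 0 →
      Tendsto (fun N : ℕ => ‖∑ i ∈ Finset.range N, x i ^ n‖ / N) atTop (𝓝 0))
    (n : ℤ) :
    PP (fun k => (((x k).arg : ℝ) : AddCircle (2 * Real.pi))) (fourier n) := by
  have hπC : ((2 * Real.pi : ℝ) : ℂ) ≠ 0 := Complex.ofReal_ne_zero.mpr (by positivity)
  have hxk : ∀ k, Complex.exp ((Complex.arg (x k) : ℂ) * Complex.I) = x k := fun k => by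
    have h := Complex.norm_mul_exp_arg_mul_I (x k)
    rwa [hx k, Complex.ofReal_one, one_mul] at h
  unfold PP
  rcases eq_or_ne n 0 with rfl | hn
  · have hL : ∀ᶠ N : ℕ in atTop, ((N : ℂ))⁻¹ * ∑ k ∈ Finset.range N,
        (fourier 0) ((((x k).arg : ℝ) : AddCircle (2 * Real.pi))) = 1 := by
      filter_upwards [eventually_ge_atTop 1] with N hN
      simp only [fourier_zero]
      rw [Finset.sum_const, Finset.card_range, nsmul_eq_mul, mul_one]
      exact inv_mul_cancel₀ (Nat.cast_ne_zero.mpr (by omega))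
    have hR : (((2 * Real.pi : ℝ) : ℂ))⁻¹ *
        ∫ t in (0 : ℝ)..(2 * Real.pi), (fourier 0) ((t : ℝ) : AddCircle (2 * Real.pi)) = 1 := by
      simp only [fourier_zero]
      rw [intervalIntegral.integral_const, sub_zero, Complex.real_smul, mul_one]
      exact inv_mul_cancel₀ hπC
    rw [hR]
    exact tendsto_const_nhds.congr' (hL.mono fun N h => h.symm)
  · have hR : (∫ t in (0 : ℝ)..(2 * Real.pi), (fourier n) ((t : ℝ) : AddCircle (2 * Real.pi))) = 0 := by
      have hcongr : ∀ t : ℝ, (fourier n) ((t : ℝ) : AddCircle (2 * Real.pi))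
          = Complex.exp (((n : ℂ) * Complex.I) * t) := fun t => by rw [hfour_val n t]
      rw [intervalIntegral.integral_congr (fun t _ => hcongr t)]
      rw [integral_exp_mul_complex (by simp [hn, Complex.I_ne_zero])]
      have h1 : Complex.exp (((n : ℂ) * Complex.I) * (((2 * Real.pi : ℝ)) : ℂ)) = 1 := by
        rw [← Complex.exp_int_mul_two_pi_mul_I n]
        congr 1
        push_cast
        ring
      rw [show (((n : ℂ) * Complex.I) * (((0:ℝ)) : ℂ)) = 0 by push_cast; ring, Complex.exp_zero,
        h1]
      simp
    rw [hR, mul_zero]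
    have hterm : ∀ k : ℕ, (fourier n) ((((x k).arg : ℝ) : AddCircle (2 * Real.pi))) = x k ^ n := by
      intro k
      have hxn : x k ^ n = Complex.exp ((n : ℂ) * Complex.I * ((x k).arg : ℂ)) := by
        conv_lhs => rw [← hxk k]
        rw [← Complex.exp_int_mul]
        congr 1
        ring
      rw [hfour_val n ((x k).arg), hxn]
    rw [tendsto_zero_iff_norm_tendsto_zero]
    have heq : (fun N : ℕ => ‖((N : ℂ))⁻¹ * ∑ k ∈ Finset.range N,
        (fourier n) ((((x k).arg : ℝ) : AddCircle (2 * Real.pi)))‖)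
        = fun N : ℕ => ‖∑ i ∈ Finset.range N, x i ^ n‖ / N := by
      funext N
      simp_rw [hterm]
      rw [norm_mul, norm_inv, Complex.norm_natCast, inv_mul_eq_div]
    rw [heq]
    exact hweyl n hn

lemma PP_all [Fact (0 < 2 * Real.pi)] (θ : ℕ → AddCircle (2 * Real.pi))
    (hfour : ∀ n : ℤ, PP θ (fourier n)) (g : C(AddCircle (2 * Real.pi), ℂ)) : PP θ g := by
  apply PP_closure
  have hsub : ((Submodule.span ℂ (Set.range (@fourier (2 * Real.pi)))) : Set _)
      ⊆ {h | PP θ h} := by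
    intro p hp
    refine Submodule.span_induction (p := fun q _ => PP θ q) ?_ (PP_zero θ)
      (fun a b _ _ ha hb => PP_add ha hb) (fun c a _ hc => PP_smul c hc) hp
    rintro q ⟨n, rfl⟩
    exact hfour n
  have hcl : closure ((Submodule.span ℂ (Set.range (@fourier (2 * Real.pi)))) :
      Set C(AddCircle (2 * Real.pi), ℂ)) = Set.univ := by
    have h : (Submodule.span ℂ (Set.range (@fourier (2 * Real.pi)))).topologicalClosure
        = (⊤ : Submodule ℂ C(AddCircle (2 * Real.pi), ℂ)) := span_fourier_closure_eq_top
    have h2 := SetLike.ext'_iff.mp h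
    rw [Submodule.topologicalClosure_coe] at h2
    rw [h2, Submodule.top_coe]
  exact closure_mono hsub (by rw [hcl]; trivial)

lemma lemGlue (x : ℕ → ℂ) (hx : ∀ n, ‖x n‖ = 1)
    (hweyl : ∀ n : ℤ, n ≠ 0 →
      Tendsto (fun N : ℕ => ‖∑ i ∈ Finset.range N, x i ^ n‖ / N) atTop (𝓝 0))
    (f : ℂ → ℝ) (hf : ContinuousOn f {z : ℂ | ‖z‖ = 1}) :
    Tendsto (fun N : ℕ => (1 / (N : ℝ)) * ∑ k ∈ Finset.range N, f (x k)) atTop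
      (𝓝 ((1 / (2 * Real.pi)) *
        ∫ t in (0 : ℝ)..(2 * Real.pi), f (Complex.exp ((t : ℂ) * Complex.I)))) := by
  haveI : Fact (0 < 2 * Real.pi) := ⟨by positivity⟩
  have hπ : (2 * Real.pi : ℝ) ≠ 0 := by positivity
  -- the continuous map F
  have hcf : Continuous fun t : AddCircle (2 * Real.pi) =>
      ((f ((AddCircle.toCircle t : ℂ)) : ℝ) : ℂ) := by
    apply Complex.continuous_ofReal.comp
    apply hf.comp_continuous
    · exact continuous_subtype_val.comp AddCircle.continuous_toCircle
    · intro t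
      simp only [Set.mem_setOf_eq, Circle.norm_coe]
  set F : C(AddCircle (2 * Real.pi), ℂ) :=
    ⟨fun t => ((f ((AddCircle.toCircle t : ℂ)) : ℝ) : ℂ), hcf⟩ with hF
  have hPF := PP_all (fun k => (((x k).arg : ℝ) : AddCircle (2 * Real.pi)))
    (PP_fourier x hx hweyl) F
  unfold PP at hPF
  -- identify the values of toCircle
  have htc : ∀ s : ℝ, ((AddCircle.toCircle ((s : ℝ) : AddCircle (2 * Real.pi)) : ℂ))
      = Complex.exp ((s : ℂ) * Complex.I) := by
    intro s
    rw [AddCircle.toCircle_apply_mk, Circle.coe_exp]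
    congr 1
    rw [div_self hπ, one_mul]
  have hxk : ∀ k, Complex.exp ((Complex.arg (x k) : ℂ) * Complex.I) = x k := fun k => by
    have h := Complex.norm_mul_exp_arg_mul_I (x k)
    rwa [hx k, Complex.ofReal_one, one_mul] at h
  -- the sums
  have hsum : ∀ N : ℕ, ((N : ℂ))⁻¹ * ∑ k ∈ Finset.range N,
      F ((((x k).arg : ℝ) : AddCircle (2 * Real.pi)))
      = (((1 / (N : ℝ)) * ∑ k ∈ Finset.range N, f (x k) : ℝ) : ℂ) := by
    intro N
    have hFk : ∀ k, F ((((x k).arg : ℝ) : AddCircle (2 * Real.pi))) = ((f (x k) : ℝ) : ℂ) := by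
      intro k
      rw [hF]
      simp only [ContinuousMap.coe_mk]
      rw [htc ((x k).arg), hxk k]
    simp_rw [hFk]
    push_cast
    ring
  -- the integral
  have hint : (((2 * Real.pi : ℝ) : ℂ))⁻¹ *
      ∫ t in (0 : ℝ)..(2 * Real.pi), F ((t : ℝ) : AddCircle (2 * Real.pi))
      = (((1 / (2 * Real.pi)) *
        ∫ t in (0 : ℝ)..(2 * Real.pi), f (Complex.exp ((t : ℂ) * Complex.I)) : ℝ) : ℂ) := by
    have hFt : ∀ t : ℝ, F ((t : ℝ) : AddCircle (2 * Real.pi))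
        = ((f (Complex.exp ((t : ℂ) * Complex.I)) : ℝ) : ℂ) := by
      intro t
      rw [hF]
      simp only [ContinuousMap.coe_mk]
      rw [htc t]
    rw [intervalIntegral.integral_congr (fun t _ => hFt t), intervalIntegral.integral_ofReal]
    push_cast
    ring
  rw [hint] at hPF
  have hPF2 := (Complex.continuous_re.tendsto _).comp ((hPF.congr hsum))
  have hfun : (Complex.re ∘ fun N : ℕ =>
      (((1 / (N : ℝ)) * ∑ k ∈ Finset.range N, f (x k) : ℝ) : ℂ))
      = fun N : ℕ => (1 / (N : ℝ)) * ∑ k ∈ Finset.range N, f (x k) :=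
    funext fun N => Complex.ofReal_re _
  rw [hfun] at hPF2
  simpa using hPF2

end Aux

theorem general_sequence_equidistribution (x : ℕ → ℂ)
    (hx : ∀ n, ‖x n‖ = 1) (hinj : Function.Injective x)
    (hls : Filter.limsup (fun N : ℕ => logEnergy x N / ((N : ℝ) * Real.log N)) atTop = -1) :
    Tendsto (fun N : ℕ => logEnergy x N / ((N : ℝ) * Real.log N)) atTop (𝓝 (-1)) ∧
    ∀ f : ℂ → ℝ, ContinuousOn f {z : ℂ | ‖z‖ = 1} →
      Tendsto (fun N : ℕ => (1 / (N : ℝ)) * ∑ k ∈ Finset.range N, f (x k)) atTop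
        (𝓝 ((1 / (2 * Real.pi)) *
          ∫ t in (0 : ℝ)..(2 * Real.pi), f (Complex.exp ((t : ℂ) * Complex.I)))) := by
  constructor
  · exact part1 x hx hinj hls
  · intro f hf
    exact lemGlue x hx (fun n hn => lemWeylZ x hx hinj hls n hn) f hf
end
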